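/- arXiv:1602.08502 — 10 statements merged into one kernel-verified Lean document; each statement's English description precedes it below -/
import Mathlib

section
/- The monoid M defined by the presentation ⟨a, b | ab^n a = aba for all n ≥ 2⟩ is not finitely presented; that is, the congruence on the free monoid {a,b}* generated by the relation set {(ab^n a, aba) : n ≥ 2} is not generated by any finite subset of pairs of words. -/
open Relation

/-- Alphabet for the monoid `M`. -/
inductive AB : Type | a | b

/-- Alphabet for the monoid `N`. -/
inductive CD : Type | c | d

abbrev WM := FreeMonoid AB
abbrev WN := FreeMonoid CD

def a : WM := FreeMonoid.of AB.a
def b : WM := FreeMonoid.of AB.b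
def c : WN := FreeMonoid.of CD.c
def d : WN := FreeMonoid.of CD.d

/-- The defining relation set of `M`: `a b^n a = a b a` for `n ≥ 2`. -/
def rM : WM → WM → Prop := fun x y => ∃ n, 2 ≤ n ∧ x = a * b ^ n * a ∧ y = a * b * a

/-- The defining relation set of `N`. -/
def rN : WN → WN → Prop := fun x y =>
  (x = c * d ^ 2 * c ∨ x = c * d ^ 4 ∨ x = c * d ^ 3 * c ^ 2 ∨ x = c * d ^ 3 * (c * d * c)) ∧
    y = c * d * c

/-- Single-step rewriting relation of a rewriting system `R`. -/
def Step {α : Type} (R : FreeMonoid α → FreeMonoid α → Prop) (x y : FreeMonoid α) : Prop :=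
  ∃ u v p q, R u v ∧ x = p * u * q ∧ y = p * v * q

/-- A word is irreducible if no single-step rewrite applies to it. -/
def Irred {α : Type} (R : FreeMonoid α → FreeMonoid α → Prop) (w : FreeMonoid α) : Prop :=
  ∀ v, ¬ Step R w v

/-- Words `a^{i₀} b a^{i₁} b ⋯ b a^{i_k}` with `k ≥ 0`, all `i_j ≥ 1`. -/
def UM : Set WM :=
  {w | ∃ l : List ℕ, l ≠ [] ∧ (∀ i ∈ l, 1 ≤ i) ∧ w = ((l.map (a ^ ·)).intersperse b).prod}

/-- Words `c^{i₀} d c^{i₁} d ⋯ d c^{i_k}` with `k ≥ 0`, all `i_j ≥ 1`. -/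
def UN : Set WN :=
  {w | ∃ l : List ℕ, l ≠ [] ∧ (∀ i ∈ l, 1 ≤ i) ∧ w = ((l.map (c ^ ·)).intersperse d).prod}

/-- Normal forms for `M`. -/
def NM : Set WM :=
  {w | (∃ s : ℕ, w = b ^ s) ∨ (∃ s : ℕ, ∃ u ∈ UM, w = b ^ s * u) ∨
    (∃ s t : ℕ, ∃ u ∈ UM, 0 < t ∧ w = b ^ s * u * b ^ t)}

/-- Normal forms for `N`. -/
def NN : Set WN :=
  {w | (∃ p : ℕ, w = d ^ p) ∨ (∃ p : ℕ, ∃ v ∈ UN, w = d ^ p * v) ∨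
    (∃ p q r : ℕ, ∃ v ∈ UN, r ≤ 3 ∧ 0 < q + r ∧ w = d ^ p * v * (d ^ 3 * c) ^ q * d ^ r)}

/-- The substitution `a ↦ c`, `b ↦ d`. -/
def bar : WM →* WN := FreeMonoid.map fun x => match x with | AB.a => CD.c | AB.b => CD.d

section Aux

/-- States of the separating automaton. -/
inductive St : Type | bot | cnt (k : ℕ) | G | B

def fa (N : ℕ) : Function.End St := fun s => match s with
  | .bot => .cnt 0
  | .cnt k => if k ≤ N then .G else .B
  | .G => .G
  | .B => .B

def fb (N : ℕ) : Function.End St := fun s => match s with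
  | .bot => .bot
  | .cnt k => .cnt (min (k + 1) (N + 1))
  | .G => .G
  | .B => .B

def phi (N : ℕ) : WM →* Function.End St :=
  FreeMonoid.lift fun x => match x with | AB.a => fa N | AB.b => fb N

lemma phi_a (N : ℕ) : phi N a = fa N := FreeMonoid.lift_eval_of _ _

lemma phi_b (N : ℕ) : phi N b = fb N := FreeMonoid.lift_eval_of _ _

lemma end_mul_apply (f g : Function.End St) (x : St) : (f * g) x = f (g x) := rfl

lemma fb_pow_cnt (N n : ℕ) : ∀ k, k ≤ N + 1 →
    (fb N ^ n) (.cnt k) = .cnt (min (k + n) (N + 1)) := by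
  induction n with
  | zero =>
      intro k hk
      show St.cnt k = St.cnt (min (k + 0) (N + 1))
      congr 1; omega
  | succ n ih =>
      intro k hk
      rw [pow_succ, end_mul_apply]
      show (fb N ^ n) (.cnt (min (k + 1) (N + 1))) = _
      rw [ih _ (by omega)]
      congr 1; omega

lemma fb_pow_G (N n : ℕ) : (fb N ^ n) St.G = St.G := by
  induction n with
  | zero => rfl
  | succ n ih => rw [pow_succ, end_mul_apply]; exact ih

lemma fb_pow_B (N n : ℕ) : (fb N ^ n) St.B = St.B := by
  induction n with
  | zero => rfl
  | succ n ih => rw [pow_succ, end_mul_apply]; exact ih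

lemma phi_word (N n : ℕ) (x : St) :
    phi N (a * b ^ n * a) x = fa N ((fb N ^ n) (fa N x)) := by
  rw [map_mul, map_mul, map_pow, phi_a, phi_b, end_mul_apply, end_mul_apply]

lemma phi_word₁ (N : ℕ) (x : St) :
    phi N (a * b * a) x = fa N ((fb N ^ 1) (fa N x)) := by
  rw [← pow_one b]; exact phi_word N 1 x

lemma fa_cnt (N k : ℕ) : fa N (St.cnt k) = if k ≤ N then St.G else St.B := rfl

lemma key1 (N n : ℕ) (h2 : 2 ≤ n) (hn : n ≤ N) :
    phi N (a * b ^ n * a) = phi N (a * b * a) := by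
  funext x
  rw [phi_word, phi_word₁]
  cases x with
  | bot =>
      show fa N ((fb N ^ n) (.cnt 0)) = fa N ((fb N ^ 1) (.cnt 0))
      rw [fb_pow_cnt N n 0 (by omega), fb_pow_cnt N 1 0 (by omega),
        fa_cnt, fa_cnt, if_pos (by omega), if_pos (by omega)]
  | cnt k =>
      rw [fa_cnt]
      by_cases h : k ≤ N
      · rw [if_pos h, fb_pow_G, fb_pow_G]
      · rw [if_neg h, fb_pow_B, fb_pow_B]
  | G => rw [show fa N St.G = St.G from rfl, fb_pow_G, fb_pow_G]
  | B => rw [show fa N St.B = St.B from rfl, fb_pow_B, fb_pow_B]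

lemma key2 (N : ℕ) (hN : 1 ≤ N) :
    phi N (a * b ^ (N + 1) * a) ≠ phi N (a * b * a) := by
  intro h
  have hx := congrFun h St.bot
  rw [phi_word, phi_word₁, show fa N St.bot = St.cnt 0 from rfl,
    fb_pow_cnt N (N + 1) 0 (by omega), fb_pow_cnt N 1 0 (by omega),
    fa_cnt, fa_cnt, if_neg (by omega), if_pos (by omega)] at hx
  exact St.noConfusion hx

/-- Truncated relation set. -/
def rMle (N : ℕ) : WM → WM → Prop :=
  fun x y => ∃ n, 2 ≤ n ∧ n ≤ N ∧ x = a * b ^ n * a ∧ y = a * b * a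

lemma rMle_mono {N M : ℕ} (h : N ≤ M) : conGen (rMle N) ≤ conGen (rMle M) :=
  Con.conGen_mono fun _ _ ⟨n, h1, h2, h3, h4⟩ => ⟨n, h1, h2.trans h, h3, h4⟩

lemma bound {x y : WM} (h : ConGen.Rel rM x y) : ∃ N, conGen (rMle N) x y := by
  induction h with
  | of x y hxy =>
      obtain ⟨n, hn, hx, hy⟩ := hxy
      exact ⟨n, ConGen.Rel.of _ _ ⟨n, hn, le_refl n, hx, hy⟩⟩
  | refl x => exact ⟨0, (conGen (rMle 0)).refl x⟩
  | symm _ ih => obtain ⟨N, h⟩ := ih; exact ⟨N, (conGen (rMle N)).symm h⟩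
  | trans _ _ ih1 ih2 =>
      obtain ⟨N1, h1⟩ := ih1; obtain ⟨N2, h2⟩ := ih2
      exact ⟨max N1 N2, (conGen (rMle (max N1 N2))).trans
        (rMle_mono (le_max_left N1 N2) h1) (rMle_mono (le_max_right N1 N2) h2)⟩
  | mul _ _ ih1 ih2 =>
      obtain ⟨N1, h1⟩ := ih1; obtain ⟨N2, h2⟩ := ih2
      exact ⟨max N1 N2, (conGen (rMle (max N1 N2))).mul
        (rMle_mono (le_max_left N1 N2) h1) (rMle_mono (le_max_right N1 N2) h2)⟩

end Aux

/-- The congruence generated by `rM` is not generated by any finite set of pairs of words;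
hence `M` is not finitely presented. -/
theorem stmt0 :
    ¬ ∃ S : Set (WM × WM), S.Finite ∧
      conGen (fun x y => (x, y) ∈ S) = conGen rM := by
  classical
  rintro ⟨S, hfin, hEq⟩
  have hstep : ∀ p ∈ S, ∃ N, conGen (rMle N) p.1 p.2 := by
    intro p hp
    have h0 : (conGen fun x y => (x, y) ∈ S) p.1 p.2 := ConGen.Rel.of _ _ hp
    rw [hEq] at h0
    exact bound h0
  choose f hf using hstep
  have hS_le : (conGen fun x y => (x, y) ∈ S) ≤
      conGen (rMle (hfin.toFinset.sup fun p => if h : p ∈ S then f p h else 0)) := by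
    apply Con.conGen_le.mpr
    intro x y hxy
    refine rMle_mono ?_ (hf (x, y) hxy)
    have hmem : (x, y) ∈ hfin.toFinset := hfin.mem_toFinset.mpr hxy
    have hle := Finset.le_sup (f := fun p => if h : p ∈ S then f p h else 0) hmem
    simpa [dif_pos hxy] using hle
  set M := max (hfin.toFinset.sup fun p => if h : p ∈ S then f p h else 0) 2 with hM
  have h1 : (conGen rM) (a * b ^ (M + 1) * a) (a * b * a) :=
    ConGen.Rel.of _ _ ⟨M + 1, by omega, rfl, rfl⟩
  rw [← hEq] at h1
  have h2 : (conGen (rMle M)) (a * b ^ (M + 1) * a) (a * b * a) :=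
    rMle_mono (le_max_left _ 2) (hS_le h1)
  have h3 : conGen (rMle M) ≤ Con.ker (phi M) := by
    apply Con.conGen_le.mpr
    rintro x y ⟨n, hn2, hnM, rfl, rfl⟩
    exact key1 M n hn2 hnM
  exact key2 M (by omega) (h3 h2)
end

section
/- The rewriting system R_M over {a,b} with rules ab^n a → aba (n ≥ 2) is locally confluent: if w → u and w → v in one step, then there exists z with u →* z and v →* z. -/
open Relation

deriving instance DecidableEq for AB

namespace Conf
open List

def Rl (m : ℕ) : List AB := AB.a :: (replicate m AB.b ++ [AB.a])

lemma Rl_len (m : ℕ) : (Rl m).length = m + 2 := by simp [Rl]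

lemma suffix_rep {s : List AB} {m : ℕ} (h : s <:+ replicate m AB.b ++ [AB.a]) :
    s = [] ∨ ∃ k, k ≤ m ∧ s = replicate k AB.b ++ [AB.a] := by
  induction m with
  | zero =>
    simp only [replicate, nil_append] at h
    rcases suffix_cons_iff.1 h with h | h
    · exact Or.inr ⟨0, le_refl _, by simpa using h⟩
    · exact Or.inl (suffix_nil.1 h)
  | succ m ih =>
    rw [replicate_succ, cons_append] at h
    rcases suffix_cons_iff.1 h with h | h
    · exact Or.inr ⟨m + 1, le_refl _, by simpa [replicate_succ] using h⟩
    · rcases ih h with h | ⟨k, hk, h⟩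
      · exact Or.inl h
      · exact Or.inr ⟨k, hk.trans (Nat.le_succ m), h⟩

lemma prefix_rep {s : List AB} {m : ℕ} (h : s <+: replicate m AB.b ++ [AB.a]) :
    (∃ k, k ≤ m ∧ s = replicate k AB.b) ∨ s = replicate m AB.b ++ [AB.a] := by
  induction m generalizing s with
  | zero =>
    simp only [replicate, nil_append] at h ⊢
    rcases s with _ | ⟨x, s⟩
    · exact Or.inl ⟨0, le_refl _, rfl⟩
    · obtain ⟨rfl, h2⟩ := cons_prefix_cons.1 h
      right; simp [prefix_nil.1 h2]
  | succ m ih =>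
    rw [replicate_succ, cons_append] at h
    rcases s with _ | ⟨x, s⟩
    · exact Or.inl ⟨0, by omega, rfl⟩
    · obtain ⟨rfl, h2⟩ := cons_prefix_cons.1 h
      rcases ih h2 with ⟨k, hk, hs⟩ | hs
      · exact Or.inl ⟨k + 1, by omega, by simp [replicate_succ, hs]⟩
      · right; simp [replicate_succ, hs]

lemma L1 {s : List AB} {m n : ℕ} (hm : 2 ≤ m) (hn : 2 ≤ n)
    (hsuf : s <:+ Rl m) (hpre : s <+: Rl n) :
    s = [] ∨ s = [AB.a] ∨ (m = n ∧ s = Rl m) := by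
  rcases suffix_cons_iff.1 hsuf with rfl | h
  · -- s = Rl m, prefix of Rl n
    right; right
    unfold Rl at hpre
    obtain ⟨-, h2⟩ := cons_prefix_cons.1 hpre
    rcases prefix_rep h2 with ⟨k, hk, he⟩ | he
    · exfalso
      have hmem : AB.a ∈ replicate k AB.b := he ▸ (by simp : AB.a ∈ replicate m AB.b ++ [AB.a])
      exact absurd (eq_of_mem_replicate hmem) (by decide)
    · have hmn : m = n := by
        have := congrArg List.length he
        simp at this; omega
      exact ⟨hmn, by simp [Rl, hmn]⟩
  · rcases suffix_rep h with rfl | ⟨k, hk, rfl⟩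
    · exact Or.inl rfl
    · rcases k with _ | k
      · exact Or.inr (Or.inl rfl)
      · exfalso
        rw [replicate_succ, cons_append] at hpre
        have := (cons_prefix_cons.1 hpre).1
        exact absurd this (by decide)

lemma L2 {t r : List AB} {m n : ℕ} (hm : 2 ≤ m) (hn : 2 ≤ n)
    (h : Rl m = t ++ (Rl n ++ r)) : t = [] ∧ m = n ∧ r = [] := by
  have ht : t = [] := by
    rcases t with _ | ⟨x, t⟩
    · rfl
    · exfalso
      have hx : x = AB.a := by
        have := congrArg (fun l => l.head?) h
        simpa [Rl] using this.symm
      subst hx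
      have := congrArg (List.count AB.a) h
      simp [Rl, count_replicate, count_cons, count_append] at this
      omega
  subst ht
  simp only [nil_append, Rl] at h
  obtain ⟨-, h⟩ := cons_eq_cons.1 h
  have hpre : replicate n AB.b ++ [AB.a] <+: replicate m AB.b ++ [AB.a] := ⟨r, by rw [h]; simp⟩
  rcases prefix_rep hpre with ⟨k, hk, he⟩ | he
  · exfalso
    have hmem : AB.a ∈ replicate k AB.b := he ▸ (by simp : AB.a ∈ replicate n AB.b ++ [AB.a])
    exact absurd (eq_of_mem_replicate hmem) (by decide)
  · have hmn : m = n := by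
      have := congrArg List.length he
      simp at this; omega
    subst hmn
    refine ⟨rfl, rfl, ?_⟩
    rw [List.append_eq] at h
    exact self_eq_append_right.1 h

lemma overlap {Q Q' t : List AB} {m n : ℕ} (hm : 2 ≤ m) (hn : 2 ≤ n)
    (h : Rl m ++ Q = t ++ (Rl n ++ Q')) :
    (t = [] ∧ m = n ∧ Q = Q') ∨
    (∃ s, t = Rl m ++ s ∧ Q = s ++ (Rl n ++ Q')) ∨
    (t = AB.a :: replicate m AB.b ∧ Q = replicate n AB.b ++ (AB.a :: Q')) := by
  rcases append_eq_append_iff.1 h with ⟨s, rfl, hQ⟩ | ⟨s, hsm, hs⟩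
  · exact Or.inr (Or.inl ⟨s, rfl, hQ⟩)
  · rcases append_eq_append_iff.1 hs with ⟨r, hr, hQ'⟩ | ⟨r, hr, hQ⟩
    · -- s = Rl n ++ r, Q' = r ++ Q : Rl n is a factor of Rl m
      obtain ⟨rfl, hmn, rfl⟩ := L2 hm hn (hsm.trans (by rw [hr]))
      exact Or.inl ⟨rfl, hmn, by simpa using hQ'.symm⟩
    · -- Rl n = s ++ r, Q = r ++ Q' : s suffix of Rl m, prefix of Rl n
      rcases L1 hm hn ⟨t, hsm.symm⟩ ⟨r, hr.symm⟩ with rfl | rfl | ⟨hmn, rfl⟩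
      · -- s = []
        refine Or.inr (Or.inl ⟨[], by simpa using hsm.symm, ?_⟩)
        rw [hQ, hr]
        simp
      · -- s = [AB.a]
        refine Or.inr (Or.inr ⟨?_, ?_⟩)
        · have h2 : (AB.a :: replicate m AB.b) ++ [AB.a] = t ++ [AB.a] := by
            simpa [Rl] using hsm
          exact (append_cancel_right h2.symm)
        · have hr2 : r = replicate n AB.b ++ [AB.a] := by
            have : Rl n = AB.a :: (replicate n AB.b ++ [AB.a]) := rfl
            rw [this] at hr
            exact (cons_eq_cons.1 hr).2.symm
          rw [hQ, hr2]; simp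
      · -- s = Rl m, m = n
        have ht : t = [] := by
          have h2 := congrArg List.length hsm
          rw [length_append] at h2
          exact length_eq_zero_iff.1 (by omega)
        subst ht
        have hr0 : r = [] := by
          have h2 := congrArg List.length hr
          rw [length_append, Rl_len, Rl_len, hmn] at h2
          exact length_eq_zero_iff.1 (by omega)
        subst hr0
        exact Or.inl ⟨rfl, hmn, by simpa using hQ⟩


lemma toList_b_pow (k : ℕ) : (b ^ k).toList = replicate k AB.b := by
  induction k with
  | zero => rfl
  | succ k ih => rw [pow_succ, FreeMonoid.toList_mul, ih]; simp [b, replicate_succ']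

lemma toList_word (p q : WM) (k : ℕ) :
    (p * (a * b ^ k * a) * q).toList = p.toList ++ (Rl k ++ q.toList) := by
  simp [FreeMonoid.toList_mul, toList_b_pow, a, Rl]

lemma eq_of_toList {x y : WM} (h : x.toList = y.toList) : x = y :=
  FreeMonoid.toList.injective h

/-- One-sided key lemma for local confluence. -/
lemma key {p q p' q' : WM} {t : List AB} {m n : ℕ} (hm : 2 ≤ m) (hn : 2 ≤ n)
    (ht : p'.toList = p.toList ++ t)
    (hq : Rl m ++ q.toList = t ++ (Rl n ++ q'.toList)) :
    ∃ z, Relation.ReflTransGen (Step rM) (p * (a * b * a) * q) z ∧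
      Relation.ReflTransGen (Step rM) (p' * (a * b * a) * q') z := by
  rcases overlap hm hn hq with ⟨rfl, rfl, hqq⟩ | ⟨s, rfl, hqq⟩ | ⟨rfl, hqq⟩
  · -- identical redexes
    have hp : p' = p := eq_of_toList (by simpa using ht)
    have hq2 : q = q' := eq_of_toList hqq
    subst hp; subst hq2
    exact ⟨_, Relation.ReflTransGen.refl, Relation.ReflTransGen.refl⟩
  · -- disjoint redexes
    set S : WM := FreeMonoid.ofList s with hS
    have hq2 : q = S * (a * b ^ n * a) * q' := by
      apply eq_of_toList
      rw [hqq]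
      simp [FreeMonoid.toList_mul, toList_b_pow, a, Rl, hS]
    have hp2 : p' = p * (a * b ^ m * a) * S := by
      apply eq_of_toList
      rw [ht]
      simp [FreeMonoid.toList_mul, toList_b_pow, a, Rl, hS]
    subst hq2; subst hp2
    refine ⟨p * (a * b * a) * S * (a * b * a) * q', ?_, ?_⟩
    · refine Relation.ReflTransGen.single ⟨a * b ^ n * a, a * b * a,
        p * (a * b * a) * S, q', ⟨n, hn, rfl, rfl⟩, ?_, ?_⟩ <;>
        simp [mul_assoc]
    · refine Relation.ReflTransGen.single ⟨a * b ^ m * a, a * b * a,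
        p, S * (a * b * a) * q', ⟨m, hm, rfl, rfl⟩, ?_, ?_⟩ <;>
        simp [mul_assoc]
  · -- overlapping at the middle letter a
    have hq2 : q = b ^ n * (a * q') := by
      apply eq_of_toList
      rw [hqq]
      simp [FreeMonoid.toList_mul, toList_b_pow, a]
    have hp2 : p' = p * (a * b ^ m) := by
      apply eq_of_toList
      rw [ht]
      simp [FreeMonoid.toList_mul, toList_b_pow, a]
    subst hq2; subst hp2
    refine ⟨p * a * b * (a * b * a) * q', ?_, ?_⟩
    · refine Relation.ReflTransGen.single ⟨a * b ^ n * a, a * b * a,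
        p * a * b, q', ⟨n, hn, rfl, rfl⟩, ?_, ?_⟩ <;>
        simp [mul_assoc]
    · refine Relation.ReflTransGen.single ⟨a * b ^ m * a, a * b * a,
        p, b * a * q', ⟨m, hm, rfl, rfl⟩, ?_, ?_⟩ <;>
        simp [mul_assoc]

end Conf

/-- The rewriting system `R_M` is locally confluent. -/
theorem stmt3 :
    ∀ w u v : WM, Step rM w u → Step rM w v →
      ∃ z, ReflTransGen (Step rM) u z ∧ ReflTransGen (Step rM) v z := by
  rintro w u v h1 h2
  obtain ⟨u1, v1, p, q, ⟨m, hm, rfl, rfl⟩, hw1, rfl⟩ := h1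
  obtain ⟨u2, v2, p', q', ⟨n, hn, rfl, rfl⟩, hw2, rfl⟩ := h2
  have hl : p.toList ++ (Conf.Rl m ++ q.toList) = p'.toList ++ (Conf.Rl n ++ q'.toList) := by
    rw [← Conf.toList_word, ← Conf.toList_word, ← hw1, ← hw2]
  rcases List.append_eq_append_iff.1 hl with ⟨t, ht, hq⟩ | ⟨t, ht, hq⟩
  · exact Conf.key hm hn ht hq
  · obtain ⟨z, hz1, hz2⟩ := Conf.key hn hm ht hq
    exact ⟨z, hz2, hz1⟩
end

section
/- The rewriting system R_N over {c,d} with rules cd²c → cdc, cd⁴ → cdc, cd³c² → cdc, cd³cdc → cdc is noetherian and locally confluent, hence complete. -/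
open Relation

instance : DecidableEq CD := fun x y => by
  cases x <;> cases y <;> first | exact .isTrue rfl | exact .isFalse nofun

def lhsN : List (List CD) :=
  [[.c,.d,.d,.c], [.c,.d,.d,.d,.d], [.c,.d,.d,.d,.c,.c], [.c,.d,.d,.d,.c,.d,.c]]

def EN : List CD := [.c,.d,.c]

def StepL (w u : List CD) : Prop :=
  ∃ p L q, L ∈ lhsN ∧ w = p ++ L ++ q ∧ u = p ++ EN ++ q

lemma fact1 : ∀ L1 ∈ lhsN, ∀ L2 ∈ lhsN, ∀ t ∈ L1.tails,
    L2.isPrefixOf t → (t = L1 ∧ t = L2) := by decide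

lemma fact2 : ∀ L1 ∈ lhsN, ∀ L2 ∈ lhsN, ∀ t ∈ L1.tails,
    t.isPrefixOf L2 → (t = [] ∨ t = [CD.c] ∨ (t = L1 ∧ t = L2)) := by decide

lemma fact3 : ∀ L ∈ lhsN, 4 ≤ L.length := by decide

lemma step_iff (w u : WN) :
    Step rN w u ↔ StepL (FreeMonoid.toList w) (FreeMonoid.toList u) := by
  constructor
  · rintro ⟨x, y, p, q, ⟨hx, hy⟩, hw, hu⟩
    refine ⟨FreeMonoid.toList p, FreeMonoid.toList x, FreeMonoid.toList q, ?_, ?_, ?_⟩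
    · rcases hx with h | h | h | h <;> subst h <;> decide
    · subst hw; rfl
    · subst hu hy; rfl
  · rintro ⟨p, L, q, hL, hw, hu⟩
    refine ⟨FreeMonoid.ofList L, FreeMonoid.ofList EN, FreeMonoid.ofList p,
      FreeMonoid.ofList q, ⟨?_, rfl⟩, ?_, ?_⟩
    · simp only [lhsN, List.mem_cons, List.not_mem_nil, or_false] at hL
      rcases hL with h | h | h | h <;> subst h
      · exact Or.inl rfl
      · exact Or.inr (Or.inl rfl)
      · exact Or.inr (Or.inr (Or.inl rfl))
      · exact Or.inr (Or.inr (Or.inr rfl))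
    · exact FreeMonoid.toList.injective hw
    · exact FreeMonoid.toList.injective hu

lemma auxConf (p1 L1 q1 p2 L2 q2 : List CD) (h1 : L1 ∈ lhsN) (h2 : L2 ∈ lhsN)
    (hlen : p1.length ≤ p2.length)
    (he : p1 ++ L1 ++ q1 = p2 ++ L2 ++ q2) :
    p1 ++ EN ++ q1 = p2 ++ EN ++ q2 ∨
      ∃ z, StepL (p1 ++ EN ++ q1) z ∧ StepL (p2 ++ EN ++ q2) z := by
  rw [List.append_assoc, List.append_assoc] at he
  obtain ⟨s, hp2, hrest⟩ :
      ∃ s, p2 = p1 ++ s ∧ L1 ++ q1 = s ++ (L2 ++ q2) := by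
    rcases List.append_eq_append_iff.mp he with ⟨s, hs1, hs2⟩ | ⟨s, hs1, hs2⟩
    · exact ⟨s, hs1, hs2⟩
    · have hsnil : s = [] := by
        have := congrArg List.length hs1
        simp at this
        exact List.length_eq_zero_iff.mp (by omega)
      subst hsnil
      exact ⟨[], by simpa using hs1.symm, by simpa using hs2.symm⟩
  subst hp2
  rcases List.append_eq_append_iff.mp hrest with ⟨t, hst, hq1⟩ | ⟨t, hL1t, hrest2⟩
  · -- disjoint: s = L1 ++ t, q1 = t ++ (L2 ++ q2)
    subst hst hq1
    refine Or.inr ⟨p1 ++ EN ++ (t ++ (EN ++ q2)), ⟨p1 ++ EN ++ t, L2, q2, h2, ?_, ?_⟩,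
      ⟨p1, L1, t ++ (EN ++ q2), h1, ?_, ?_⟩⟩ <;> simp [List.append_assoc]
  · -- L1 = s ++ t, L2 ++ q2 = t ++ q1
    rcases List.append_eq_append_iff.mp hrest2 with ⟨r, htr, hq2⟩ | ⟨r, hL2, hq1⟩
    · -- containment: t = L2 ++ r
      have hsuf : t ∈ L1.tails := (List.mem_tails _ _).mpr ⟨s, hL1t.symm⟩
      have hpre : L2.isPrefixOf t := List.isPrefixOf_iff_prefix.mpr ⟨r, htr.symm⟩
      obtain ⟨ht1, ht2⟩ := fact1 L1 h1 L2 h2 t hsuf hpre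
      have hs : s = [] := by
        have : s ++ t = t := by rw [← hL1t, ht1]
        exact List.append_left_eq_self.mp this
      have hr : r = [] := by
        have : L2 ++ r = L2 := by rw [← htr, ht2]
        exact (List.append_right_eq_self).mp this
      subst hs hr
      left
      simp [hq2]
    · -- overlap: L2 = t ++ r, q1 = r ++ q2
      have hsuf : t ∈ L1.tails := (List.mem_tails _ _).mpr ⟨s, hL1t.symm⟩
      have hpre : t.isPrefixOf L2 := List.isPrefixOf_iff_prefix.mpr ⟨r, hL2.symm⟩
      rcases fact2 L1 h1 L2 h2 t hsuf hpre with ht | ht | ⟨ht1, ht2⟩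
      · -- adjacent: t = [], L1 = s, q1 = L2 ++ q2
        subst ht
        simp only [List.append_nil] at hL1t
        simp only [List.nil_append] at hL2
        subst hL1t hL2 hq1
        refine Or.inr ⟨p1 ++ EN ++ (EN ++ q2), ⟨p1 ++ EN, L2, q2, h2, ?_, ?_⟩,
          ⟨p1, L1, EN ++ q2, h1, ?_, ?_⟩⟩ <;> simp [List.append_assoc]
      · -- true overlap with t = [c]
        subst ht hq1 hL2 hL1t
        refine Or.inr ⟨p1 ++ [CD.c, CD.d, CD.c, CD.d, CD.c] ++ q2,
          ⟨p1 ++ [CD.c, CD.d], [CD.c] ++ r, q2, h2, ?_, ?_⟩,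
          ⟨p1, s ++ [CD.c], [CD.d, CD.c] ++ q2, h1, ?_, ?_⟩⟩ <;> simp [EN, List.append_assoc]
      · -- t = L1 = L2
        have hs : s = [] := by
          have : s ++ t = t := by rw [← hL1t, ht1]
          exact List.append_left_eq_self.mp this
        have hr : r = [] := by
          have : t ++ r = t := by rw [← hL2, ht2]
          exact List.append_right_eq_self.mp this
        subst hs hr
        left
        simp [hq1]

lemma strongConf {w u v : WN} (hu : Step rN w u) (hv : Step rN w v) :
    u = v ∨ ∃ z, Step rN u z ∧ Step rN v z := by
  rw [step_iff] at hu hv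
  obtain ⟨p1, L1, q1, h1, hw1, hu1⟩ := hu
  obtain ⟨p2, L2, q2, h2, hw2, hv1⟩ := hv
  have he : p1 ++ L1 ++ q1 = p2 ++ L2 ++ q2 := by rw [← hw1, ← hw2]
  rcases le_total p1.length p2.length with hle | hle
  · rcases auxConf p1 L1 q1 p2 L2 q2 h1 h2 hle he with h | ⟨z, hz1, hz2⟩
    · left
      apply FreeMonoid.toList.injective
      rw [hu1, hv1, h]
    · refine Or.inr ⟨FreeMonoid.ofList z, ?_, ?_⟩ <;> rw [step_iff]
      · rw [hu1]; exact hz1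
      · rw [hv1]; exact hz2
  · rcases auxConf p2 L2 q2 p1 L1 q1 h2 h1 hle he.symm with h | ⟨z, hz1, hz2⟩
    · left
      apply FreeMonoid.toList.injective
      rw [hu1, hv1, h]
    · refine Or.inr ⟨FreeMonoid.ofList z, ?_, ?_⟩ <;> rw [step_iff]
      · rw [hu1]; exact hz2
      · rw [hv1]; exact hz1


/-- The rewriting system `R_N` is noetherian and locally confluent, hence complete. -/
theorem stmt4 :
    (WellFounded fun x y : WN => Step rN y x) ∧
    (∀ w u v : WN, Step rN w u → Step rN w v →
      ∃ z, ReflTransGen (Step rN) u z ∧ ReflTransGen (Step rN) v z) := by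
  constructor
  · have hsub : Subrelation (fun x y : WN => Step rN y x)
        (InvImage Nat.lt fun w : WN => (FreeMonoid.toList w).length) := by
      intro x y h
      rw [step_iff] at h
      obtain ⟨p, L, q, hL, hw, hu⟩ := h
      have h4 := fact3 L hL
      show (FreeMonoid.toList x).length < (FreeMonoid.toList y).length
      rw [hw, hu]
      simp only [List.length_append, EN, List.length_cons, List.length_nil]
      omega
    exact Subrelation.wf hsub (InvImage.wf _ Nat.lt_wfRel.wf)
  · intro w u v hu hv
    rcases strongConf hu hv with h | ⟨z, hz1, hz2⟩
    · exact ⟨u, ReflTransGen.refl, h ▸ ReflTransGen.refl⟩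
    · exact ⟨z, ReflTransGen.single hz1, ReflTransGen.single hz2⟩
end

section
/- A word w ∈ {a,b}* is irreducible with respect to R_M = {(ab^n a, aba) : n ≥ 2} if and only if w has the form b^s, or b^s u, or b^s u b^t, where s ≥ 0, t ≥ 1, and u is a word of the form a^{i₀} b a^{i₁} b ⋯ b a^{i_k} with k ≥ 0 and all i_j ≥ 1. -/
open Relation

/-! ### Auxiliary machinery -/

namespace Stmt6Aux

open FreeMonoid List

/-- `fg [j₀, j₁, …, jₖ] = b^{j₀} a b^{j₁} a ⋯ a b^{jₖ}` as a list. -/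
def fg : List ℕ → List AB
  | [] => []
  | [j] => List.replicate j AB.b
  | j :: k :: rest => List.replicate j AB.b ++ AB.a :: fg (k :: rest)

lemma fg_cons (j : ℕ) (x : List ℕ) (h : x ≠ []) :
    fg (j :: x) = List.replicate j AB.b ++ AB.a :: fg x := by
  cases x with
  | nil => exact absurd rfl h
  | cons k r => rfl

lemma fg_b (j : ℕ) (x : List ℕ) : fg ((j + 1) :: x) = AB.b :: fg (j :: x) := by
  cases x with
  | nil => rfl
  | cons k r => rfl

lemma fg_a (x : List ℕ) (h : x ≠ []) : fg (0 :: x) = AB.a :: fg x := by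
  rw [fg_cons _ _ h]; rfl

lemma exists_gaps (w : List AB) : ∃ js, js ≠ [] ∧ w = fg js := by
  induction w with
  | nil => exact ⟨[0], by simp, rfl⟩
  | cons x w' ih =>
    obtain ⟨js, hne, hw⟩ := ih
    cases x with
    | a => exact ⟨0 :: js, by simp, by rw [fg_a _ hne, ← hw]⟩
    | b =>
      obtain ⟨j, tl, rfl⟩ := List.exists_cons_of_ne_nil hne
      exact ⟨(j + 1) :: tl, by simp, by rw [fg_b, ← hw]⟩

/-- A gaps list has an interior gap of size `≥ 2`. -/
def Bad (js : List ℕ) : Prop := ∃ p m q, p ≠ [] ∧ q ≠ [] ∧ 2 ≤ m ∧ js = p ++ m :: q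

lemma fg_append (p : List ℕ) (m : ℕ) (q : List ℕ) (hp : p ≠ []) :
    fg (p ++ m :: q) = fg p ++ AB.a :: fg (m :: q) := by
  induction p with
  | nil => exact absurd rfl hp
  | cons j p' ih =>
    cases p' with
    | nil =>
      show fg (j :: m :: q) = fg [j] ++ AB.a :: fg (m :: q)
      rw [fg_cons j (m :: q) (by simp)]; rfl
    | cons k r =>
      rw [List.cons_append, fg_cons j ((k :: r) ++ m :: q) (by simp),
        ih (by simp), fg_cons j (k :: r) (by simp)]
      simp

lemma split_lemma : ∀ (j : ℕ) (T P R : List AB),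
    List.replicate j AB.b ++ AB.a :: T = P ++ AB.a :: R →
    (P = List.replicate j AB.b ∧ T = R) ∨
      (∃ P', P = List.replicate j AB.b ++ AB.a :: P' ∧ T = P' ++ AB.a :: R) := by
  intro j
  induction j with
  | zero =>
    intro T P R h
    cases P with
    | nil => simp at h; exact Or.inl ⟨rfl, h⟩
    | cons x P' =>
      simp at h
      obtain ⟨rfl, h⟩ := h
      exact Or.inr ⟨P', rfl, h⟩
  | succ j ih =>
    intro T P R h
    cases P with
    | nil =>
      rw [List.replicate_succ] at h
      simp at h
    | cons x P' =>
      rw [List.replicate_succ] at h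
      simp only [List.cons_append, List.cons.injEq] at h
      obtain ⟨rfl, h⟩ := h
      rcases ih T P' R h with ⟨rfl, h2⟩ | ⟨P'', rfl, h2⟩
      · exact Or.inl ⟨List.replicate_succ.symm, h2⟩
      · exact Or.inr ⟨P'', by rw [List.replicate_succ]; rfl, h2⟩

lemma bad_cons {js : List ℕ} (j : ℕ) (h : Bad js) : Bad (j :: js) := by
  obtain ⟨p, m, q, hp, hq, hm, he⟩ := h
  exact ⟨j :: p, m, q, by simp, hq, hm, by rw [he]; rfl⟩

lemma a_not_mem_replicate (n : ℕ) : AB.a ∉ List.replicate n AB.b := by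
  intro h
  have := List.eq_of_mem_replicate h
  exact AB.noConfusion this

lemma main_hard : ∀ (js : List ℕ) (P : List AB) (n : ℕ) (Q : List AB), js ≠ [] → 2 ≤ n →
    fg js = P ++ AB.a :: (List.replicate n AB.b ++ AB.a :: Q) → Bad js := by
  intro js
  induction js with
  | nil => intro _ _ _ h; exact absurd rfl h
  | cons j rest ih =>
    intro P n Q _ hn heq
    cases rest with
    | nil =>
      exfalso
      apply a_not_mem_replicate j
      show AB.a ∈ fg [j]
      rw [heq]
      simp
    | cons k rest2 =>
      rw [fg_cons j (k :: rest2) (by simp)] at heq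
      rcases split_lemma j (fg (k :: rest2)) P _ heq with ⟨rfl, h2⟩ | ⟨P', rfl, h2⟩
      · -- fg (k :: rest2) = replicate n b ++ a :: Q
        cases rest2 with
        | nil =>
          exfalso
          apply a_not_mem_replicate k
          show AB.a ∈ fg [k]
          rw [h2]
          simp
        | cons k2 rest3 =>
          rw [fg_cons k (k2 :: rest3) (by simp)] at h2
          rcases split_lemma k (fg (k2 :: rest3)) (List.replicate n AB.b) Q h2 with
            ⟨hrep, _⟩ | ⟨P', hrep, _⟩
          · have hkn : k = n := by
              have := congrArg List.length hrep
              simpa using this.symm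
            exact ⟨[j], k, k2 :: rest3, by simp, by simp, hkn ▸ hn, rfl⟩
          · exfalso
            apply a_not_mem_replicate n
            rw [hrep]
            simp
      · exact bad_cons j (ih P' n Q (by simp) hn h2)

/-! ### Bridging between `FreeMonoid` and lists -/

lemma eq_ofList {w : WM} {L : List AB} (h : FreeMonoid.toList w = L) :
    w = FreeMonoid.ofList L := by
  rw [← h]; rfl

lemma tl_bpow (s : ℕ) : FreeMonoid.toList (b ^ s) = List.replicate s AB.b := by
  induction s with
  | zero => rfl
  | succ n ihn =>
    rw [pow_succ, FreeMonoid.toList_mul, ihn,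
      show FreeMonoid.toList b = [AB.b] from rfl, ← List.replicate_succ']

lemma tl_apow (s : ℕ) : FreeMonoid.toList (a ^ s) = List.replicate s AB.a := by
  induction s with
  | zero => rfl
  | succ n ihn =>
    rw [pow_succ, FreeMonoid.toList_mul, ihn,
      show FreeMonoid.toList a = [AB.a] from rfl, ← List.replicate_succ']

lemma ofList_rep_b (s : ℕ) : FreeMonoid.ofList (List.replicate s AB.b) = b ^ s :=
  (eq_ofList (tl_bpow s)).symm

lemma ofList_rep_a (s : ℕ) : FreeMonoid.ofList (List.replicate s AB.a) = a ^ s :=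
  (eq_ofList (tl_apow s)).symm

lemma tl_rule (n : ℕ) :
    FreeMonoid.toList (a * b ^ n * a) = AB.a :: (List.replicate n AB.b ++ [AB.a]) := by
  rw [FreeMonoid.toList_mul, FreeMonoid.toList_mul, tl_bpow]
  rfl

/-! ### `fg` versus `UM` -/

lemma UM_a {u : WM} (h : u ∈ UM) : a * u ∈ UM := by
  obtain ⟨l, hne, h1, hu⟩ := h
  obtain ⟨i, tl, rfl⟩ := List.exists_cons_of_ne_nil hne
  refine ⟨(i + 1) :: tl, by simp, ?_, ?_⟩
  · intro x hx
    rcases List.mem_cons.1 hx with rfl | hx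
    · omega
    · exact h1 x (List.mem_cons_of_mem _ hx)
  · cases tl with
    | nil =>
      simp only [List.map_cons, List.map_nil, List.intersperse_singleton,
        List.prod_singleton] at hu ⊢
      rw [hu, pow_succ']
    | cons y ys =>
      simp only [List.map_cons, List.intersperse_cons_cons, List.prod_cons] at hu ⊢
      rw [hu, pow_succ', mul_assoc]

lemma UM_ab {u : WM} (h : u ∈ UM) : a * (b * u) ∈ UM := by
  obtain ⟨l, hne, h1, hu⟩ := h
  obtain ⟨i, tl, rfl⟩ := List.exists_cons_of_ne_nil hne
  refine ⟨1 :: i :: tl, by simp, ?_, ?_⟩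
  · intro x hx
    rcases List.mem_cons.1 hx with rfl | hx
    · omega
    · exact h1 x hx
  · simp only [List.map_cons, List.intersperse_cons_cons, List.prod_cons] at hu ⊢
    rw [hu, pow_one]

lemma a_mem_UM : a ∈ UM := by
  refine ⟨[1], by simp, by simp, ?_⟩
  simp

lemma U_of : ∀ (mid : List ℕ), (∀ m ∈ mid, m ≤ 1) →
    FreeMonoid.ofList (fg (0 :: (mid ++ [0]))) ∈ UM := by
  intro mid
  induction mid with
  | nil =>
    intro _
    have : fg (0 :: ([] ++ [0])) = [AB.a] := by
      rw [List.nil_append, fg_a [0] (by simp)]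
      rfl
    rw [this]
    exact a_mem_UM
  | cons m r ih =>
    intro hm
    have hr : ∀ x ∈ r, x ≤ 1 := fun x hx => hm x (List.mem_cons_of_mem _ hx)
    have hm0 : m ≤ 1 := hm m List.mem_cons_self
    interval_cases m
    · rw [List.cons_append, fg_a (0 :: (r ++ [0])) (by simp),
        FreeMonoid.ofList_cons]
      exact UM_a (ih hr)
    · rw [List.cons_append, fg_a (1 :: (r ++ [0])) (by simp),
        show (1 : ℕ) = 0 + 1 from rfl, fg_b 0 (r ++ [0]),
        FreeMonoid.ofList_cons, FreeMonoid.ofList_cons]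
      exact UM_ab (ih hr)

lemma fg_shead (s : ℕ) (x : List ℕ) (h : x ≠ []) :
    fg (s :: x) = List.replicate s AB.b ++ fg (0 :: x) := by
  rw [fg_cons s x h, fg_a x h]

lemma fg_last (t : ℕ) : ∀ (y : List ℕ), y ≠ [] →
    fg (y ++ [t]) = fg (y ++ [0]) ++ List.replicate t AB.b := by
  intro y
  induction y with
  | nil => intro h; exact absurd rfl h
  | cons j y' ih =>
    intro _
    cases y' with
    | nil =>
      rw [List.cons_append, List.nil_append, fg_cons j [t] (by simp),
        List.cons_append, List.nil_append, fg_cons j [0] (by simp)]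
      show _ = (List.replicate j AB.b ++ (AB.a :: List.replicate 0 AB.b)) ++ _
      simp [fg]
    | cons k r =>
      have h1 : (j :: k :: r) ++ [t] = j :: ((k :: r) ++ [t]) := rfl
      have h2 : (j :: k :: r) ++ [0] = j :: ((k :: r) ++ [0]) := rfl
      rw [h1, h2, fg_cons j ((k :: r) ++ [t]) (by simp),
        fg_cons j ((k :: r) ++ [0]) (by simp), ih (by simp)]
      simp

/-! ### Encoding a `UM`-datum as a gaps list -/

def e : List ℕ → List ℕ
  | [] => []
  | [i] => List.replicate (i - 1) 0
  | i :: l => List.replicate (i - 1) 0 ++ 1 :: e l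

lemma e_le : ∀ (l : List ℕ), ∀ m ∈ e l, m ≤ 1 := by
  intro l
  induction l with
  | nil => simp [e]
  | cons i l ih =>
    cases l with
    | nil =>
      intro m hm
      have := List.eq_of_mem_replicate hm
      omega
    | cons k r =>
      intro m hm
      show m ≤ 1
      rcases List.mem_append.1 hm with h | h
      · have := List.eq_of_mem_replicate h; omega
      · rcases List.mem_cons.1 h with rfl | h
        · omega
        · exact ih m h

lemma fg_apow : ∀ (j : ℕ) (x : List ℕ), x ≠ [] →
    fg (0 :: (List.replicate j 0 ++ x)) = List.replicate (j + 1) AB.a ++ fg x := by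
  intro j
  induction j with
  | zero =>
    intro x h
    rw [List.replicate_zero, List.nil_append, fg_a x h]
    rfl
  | succ j ih =>
    intro x h
    rw [List.replicate_succ, List.cons_append, fg_a (0 :: (List.replicate j 0 ++ x)) (by simp),
      ih x h]
    rfl

lemma e_spec : ∀ (l : List ℕ), l ≠ [] → (∀ i ∈ l, 1 ≤ i) →
    FreeMonoid.ofList (fg (0 :: (e l ++ [0]))) = ((l.map (a ^ ·)).intersperse b).prod := by
  intro l
  induction l with
  | nil => intro h; exact absurd rfl h
  | cons i l' ih =>
    intro _ h1
    obtain ⟨j, rfl⟩ : ∃ j, i = j + 1 := by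
      have := h1 i List.mem_cons_self; exact ⟨i - 1, by omega⟩
    cases l' with
    | nil =>
      show FreeMonoid.ofList (fg (0 :: (List.replicate (j + 1 - 1) 0 ++ [0]))) = _
      rw [show j + 1 - 1 = j from rfl, fg_apow j [0] (by simp),
        show fg [0] = [] from rfl, List.append_nil]
      simp only [List.map_cons, List.map_nil, List.intersperse_singleton, List.prod_singleton]
      exact ofList_rep_a (j + 1)
    | cons k r =>
      have hl' : ∀ x ∈ k :: r, 1 ≤ x := fun x hx => h1 x (List.mem_cons_of_mem _ hx)
      show FreeMonoid.ofList
          (fg (0 :: ((List.replicate (j + 1 - 1) 0 ++ 1 :: e (k :: r)) ++ [0]))) = _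
      rw [show j + 1 - 1 = j from rfl, List.append_assoc, List.cons_append,
        fg_apow j (1 :: (e (k :: r) ++ [0])) (by simp),
        show (1 : ℕ) = 0 + 1 from rfl, fg_b 0 (e (k :: r) ++ [0]),
        FreeMonoid.ofList_append, FreeMonoid.ofList_cons, ofList_rep_a,
        ih (by simp) hl']
      simp only [List.map_cons, List.intersperse_cons_cons, List.prod_cons]
      rfl

lemma not_bad_mid {mid : List ℕ} (hmid : ∀ m ∈ mid, m ≤ 1) (s t : ℕ) :
    ¬ Bad (s :: (mid ++ [t])) := by
  rintro ⟨p, m, q, hp, hq, hm, he⟩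
  obtain ⟨x, p', rfl⟩ := List.exists_cons_of_ne_nil hp
  rw [List.cons_append] at he
  have he2 : mid ++ [t] = p' ++ m :: q := by
    have := he
    simp only [List.cons.injEq] at this
    exact this.2
  have hq2 : q = q.dropLast ++ [q.getLast hq] := (List.dropLast_append_getLast hq).symm
  rw [hq2] at he2
  have he3 : mid ++ [t] = (p' ++ m :: q.dropLast) ++ [q.getLast hq] := by
    rw [he2]; simp
  have := (List.append_inj' he3 rfl).1
  have hmem : m ∈ mid := by rw [this]; simp
  have := hmid m hmem
  omega

/-! ### The two directions -/

lemma bad_step {js : List ℕ} (h : Bad js) : ∃ v, Step rM (FreeMonoid.ofList (fg js)) v := by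
  obtain ⟨p, m, q, hp, hq, hm, rfl⟩ := h
  refine ⟨FreeMonoid.ofList (fg p) * (a * b * a) * FreeMonoid.ofList (fg q),
    a * b ^ m * a, a * b * a, FreeMonoid.ofList (fg p), FreeMonoid.ofList (fg q),
    ⟨m, hm, rfl, rfl⟩, ?_, rfl⟩
  rw [fg_append p m q hp, fg_cons m q hq]
  apply FreeMonoid.toList.injective
  simp [FreeMonoid.toList_mul, tl_bpow, show FreeMonoid.toList a = [AB.a] from rfl]

lemma step_bad {js : List ℕ} {v : WM} (hne : js ≠ [])
    (h : Step rM (FreeMonoid.ofList (fg js)) v) : Bad js := by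
  obtain ⟨u, v', p, q, ⟨n, hn, rfl, rfl⟩, hw, _⟩ := h
  apply main_hard js (FreeMonoid.toList p) n (FreeMonoid.toList q) hne hn
  have := congrArg FreeMonoid.toList hw
  simp only [FreeMonoid.toList_mul, tl_bpow, FreeMonoid.toList_ofList,
    show FreeMonoid.toList a = [AB.a] from rfl] at this
  rw [this]
  simp

theorem stmt6_fwd (w : WM) (h : Irred rM w) : w ∈ NM := by
  obtain ⟨js, hne, hfg⟩ := exists_gaps (FreeMonoid.toList w)
  have hw : w = FreeMonoid.ofList (fg js) := eq_ofList hfg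
  have hgood : ¬ Bad js := by
    intro hbad
    obtain ⟨v, hv⟩ := bad_step hbad
    exact h v (hw ▸ hv)
  obtain ⟨s, rest, rfl⟩ := List.exists_cons_of_ne_nil hne
  cases rest with
  | nil =>
    left
    exact ⟨s, by rw [hw, show fg [s] = List.replicate s AB.b from rfl, ofList_rep_b]⟩
  | cons k rest2 =>
    set rest := k :: rest2 with hrest
    have hrne : rest ≠ [] := by simp [hrest]
    set mid := rest.dropLast with hmid
    set t := rest.getLast hrne with ht
    have hsplit : rest = mid ++ [t] := (List.dropLast_append_getLast hrne).symm
    have hmidle : ∀ m ∈ mid, m ≤ 1 := by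
      intro m hmem
      by_contra hgt
      obtain ⟨p', q', hpq⟩ := List.append_of_mem hmem
      exact hgood ⟨s :: p', m, q' ++ [t], by simp, by simp, by omega,
        by rw [hsplit, hpq]; simp⟩
    have hu : FreeMonoid.ofList (fg (0 :: (mid ++ [0]))) ∈ UM := U_of mid hmidle
    have hkey : fg (s :: rest) =
        List.replicate s AB.b ++ (fg (0 :: (mid ++ [0])) ++ List.replicate t AB.b) := by
      rw [hsplit, fg_shead s (mid ++ [t]) (by simp),
        show (0 : ℕ) :: (mid ++ [t]) = (0 :: mid) ++ [t] from rfl,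
        fg_last t (0 :: mid) (by simp)]
      simp
    rcases Nat.eq_zero_or_pos t with ht0 | ht0
    · right; left
      refine ⟨s, FreeMonoid.ofList (fg (0 :: (mid ++ [0]))), hu, ?_⟩
      rw [hw, hkey, ht0]
      apply FreeMonoid.toList.injective
      simp [FreeMonoid.toList_mul, tl_bpow, FreeMonoid.toList_ofList]
    · right; right
      refine ⟨s, t, FreeMonoid.ofList (fg (0 :: (mid ++ [0]))), hu, ht0, ?_⟩
      rw [hw, hkey]
      apply FreeMonoid.toList.injective
      simp [FreeMonoid.toList_mul, tl_bpow, FreeMonoid.toList_ofList]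

theorem stmt6_bwd (w : WM) (h : w ∈ NM) : Irred rM w := by
  have hrep : ∃ js, js ≠ [] ∧ ¬ Bad js ∧ w = FreeMonoid.ofList (fg js) := by
    rcases h with ⟨s, rfl⟩ | ⟨s, u, ⟨l, hlne, hl1, rfl⟩, rfl⟩ |
      ⟨s, t, u, ⟨l, hlne, hl1, rfl⟩, ht, rfl⟩
    · refine ⟨[s], by simp, ?_, ?_⟩
      · rintro ⟨p, m, q, hp, hq, _, he⟩
        obtain ⟨x, p', rfl⟩ := List.exists_cons_of_ne_nil hp
        simp at he
      · rw [show fg [s] = List.replicate s AB.b from rfl, ofList_rep_b]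
    · refine ⟨s :: (e l ++ [0]), by simp, not_bad_mid (e_le l) s 0, ?_⟩
      rw [fg_shead s (e l ++ [0]) (by simp), FreeMonoid.ofList_append, ofList_rep_b,
        e_spec l hlne hl1]
    · refine ⟨s :: (e l ++ [t]), by simp, not_bad_mid (e_le l) s t, ?_⟩
      rw [fg_shead s (e l ++ [t]) (by simp),
        show (0 : ℕ) :: (e l ++ [t]) = (0 :: e l) ++ [t] from rfl,
        fg_last t (0 :: e l) (by simp), FreeMonoid.ofList_append, FreeMonoid.ofList_append,
        ofList_rep_b, ofList_rep_b,
        show ((0 : ℕ) :: e l) ++ [0] = 0 :: (e l ++ [0]) from rfl, e_spec l hlne hl1,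
        mul_assoc]
  obtain ⟨js, hne, hgood, rfl⟩ := hrep
  intro v hv
  exact hgood (step_bad hne hv)

end Stmt6Aux

/-- A word is irreducible for `R_M` iff it is of the form `b^s`, `b^s u`, or `b^s u b^t`
with `u ∈ U_M`, `s ≥ 0`, `t ≥ 1`. -/
theorem stmt6 (w : WM) : Irred rM w ↔ w ∈ NM :=
  ⟨Stmt6Aux.stmt6_fwd w, Stmt6Aux.stmt6_bwd w⟩
end

section
/- Every element of the monoid M = ⟨a, b | ab^n a = aba (n ≥ 2)⟩ is represented by exactly one word in the set N_M = {b^s, b^s u, b^s u b^t : u ∈ U_M, s ≥ 0, t > 0}, where U_M = {a^{i₀} b a^{i₁} b ⋯ b a^{i_k} : k ≥ 0, all i_j ≥ 1}. -/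
open Relation

namespace Stmt8

/-! ### An auxiliary monoid of normal-form data -/

def Mg : ℕ × List ℕ → ℕ × List ℕ → ℕ × List ℕ
  | (i, []), q => (i + q.1 + 1, q.2)
  | (i, x :: r), q => (i, (Mg (x, r) q).1 :: (Mg (x, r) q).2)

@[simp] lemma Mg_nil (i : ℕ) (q : ℕ × List ℕ) : Mg (i, []) q = (i + q.1 + 1, q.2) := by
  simp [Mg]

@[simp] lemma Mg_cons (i x : ℕ) (r : List ℕ) (q : ℕ × List ℕ) :
    Mg (i, x :: r) q = (i, (Mg (x, r) q).1 :: (Mg (x, r) q).2) := by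
  simp [Mg]

def G (p : ℕ × List ℕ) (k : ℕ) (q : ℕ × List ℕ) : ℕ × List ℕ :=
  if k = 0 then Mg p q else (p.1, p.2 ++ q.1 :: q.2)

lemma MgA (r : List ℕ) (i : ℕ) (q : ℕ × List ℕ) (L : List ℕ) :
    Mg (i, r) (q.1, q.2 ++ L) = ((Mg (i, r) q).1, (Mg (i, r) q).2 ++ L) := by
  induction r generalizing i with
  | nil => simp
  | cons x r ih => simp [ih]

lemma MgB (r : List ℕ) (i j : ℕ) (r' : List ℕ) (q : ℕ × List ℕ) :
    Mg (i, r ++ j :: r') q = (i, r ++ (Mg (j, r') q).1 :: (Mg (j, r') q).2) := by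
  induction r generalizing i with
  | nil => simp
  | cons x r ih => simp [ih]

lemma MgC (r : List ℕ) (i : ℕ) (q rr : ℕ × List ℕ) :
    Mg (Mg (i, r) q) rr = Mg (i, r) (Mg q rr) := by
  induction r generalizing i with
  | nil =>
    obtain ⟨j, r'⟩ := q
    cases r' with
    | nil => simp; omega
    | cons x r' => simp
  | cons x r ih => simp [ih]

lemma Gassoc (p q rr : ℕ × List ℕ) (k k' : ℕ) :
    G (G p k q) k' rr = G p k (G q k' rr) := by
  obtain ⟨i, r⟩ := p; obtain ⟨j, r'⟩ := q; obtain ⟨l, r''⟩ := rr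
  by_cases hk : k = 0 <;> by_cases hk' : k' = 0 <;> simp only [G, hk, hk', if_true, if_false,
    if_pos, if_neg, not_false_iff]
  · exact MgC r i _ _
  · simpa using (MgA r i (j, r') (l :: r'')).symm
  · simp [MgB]
  · simp

inductive T : Type
  | L (n : ℕ)
  | R (s i : ℕ) (r : List ℕ) (t : ℕ)

def mulT : T → T → T
  | .L m, .L n => .L (m + n)
  | .L m, .R s i r t => .R (m + s) i r t
  | .R s i r t, .L n => .R s i r (t + n)
  | .R s i r t, .R s' i' r' t' =>
      .R s (G (i, r) (t + s') (i', r')).1 (G (i, r) (t + s') (i', r')).2 t'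

instance : Monoid T where
  mul := mulT
  one := .L 0
  one_mul x := by cases x <;> simp [mulT, HMul.hMul, Mul.mul]
  mul_one x := by cases x <;> simp [mulT, HMul.hMul, Mul.mul]
  mul_assoc x y z := by
    show mulT (mulT x y) z = mulT x (mulT y z)
    cases x <;> cases y <;> cases z <;> simp [mulT, Nat.add_assoc, Gassoc]

@[simp] lemma L_mul_L (m n : ℕ) : (T.L m) * (T.L n) = T.L (m + n) := rfl
@[simp] lemma L_mul_R (m s i : ℕ) (r : List ℕ) (t : ℕ) :
    (T.L m) * (T.R s i r t) = T.R (m + s) i r t := rfl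
@[simp] lemma R_mul_L (s i : ℕ) (r : List ℕ) (t n : ℕ) :
    (T.R s i r t) * (T.L n) = T.R s i r (t + n) := rfl
@[simp] lemma R_mul_R (s i : ℕ) (r : List ℕ) (t s' i' : ℕ) (r' : List ℕ) (t' : ℕ) :
    (T.R s i r t) * (T.R s' i' r' t') =
      T.R s (G (i, r) (t + s') (i', r')).1 (G (i, r) (t + s') (i', r')).2 t' := rfl
@[simp] lemma one_T : (1 : T) = T.L 0 := rfl

end Stmt8

namespace Stmt8

def uform (i : ℕ) (r : List ℕ) : WM := a ^ (i + 1) * (r.map fun j => b * a ^ (j + 1)).prod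

@[simp] lemma uform_nil (i : ℕ) : uform i [] = a ^ (i + 1) := by simp [uform]

lemma uform_cons (i j : ℕ) (r : List ℕ) :
    uform i (j :: r) = a ^ (i + 1) * (b * uform j r) := by
  simp [uform, mul_assoc]

def phi : WM →* T := FreeMonoid.lift fun x => match x with | AB.a => .R 0 0 [] 0 | AB.b => .L 1

@[simp] lemma phi_a : phi a = .R 0 0 [] 0 := by simp [phi, a]
@[simp] lemma phi_b : phi b = .L 1 := by simp [phi, b]

@[simp] lemma phi_bpow (s : ℕ) : phi (b ^ s) = .L s := by
  induction s with
  | zero => simp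
  | succ n ih => rw [pow_succ, map_mul, ih, phi_b, L_mul_L]

lemma phi_apow (m : ℕ) : phi (a ^ (m + 1)) = .R 0 m [] 0 := by
  induction m with
  | zero => rw [pow_one]; exact phi_a
  | succ n ih =>
    rw [pow_succ, map_mul, ih, phi_a, R_mul_R]
    simp [G]

lemma phi_uform (i : ℕ) (r : List ℕ) : phi (uform i r) = .R 0 i r 0 := by
  induction r generalizing i with
  | nil => simpa using phi_apow i
  | cons j r ih =>
    rw [uform_cons, map_mul, map_mul, phi_apow, phi_b, ih]
    simp [G]

def decode : T → WM
  | .L n => b ^ n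
  | .R s i r t => b ^ s * uform i r * b ^ t

lemma inter_prod (n : ℕ) (r : List ℕ) :
    (((n :: r).map (a ^ ·)).intersperse b).prod = a ^ n * (r.map fun j => b * a ^ j).prod := by
  induction r generalizing n with
  | nil => simp
  | cons m r ih =>
    rw [List.map_cons, List.map_cons, List.intersperse_cons_cons, List.prod_cons, List.prod_cons,
      ← List.map_cons, ih]
    simp [mul_assoc]

lemma uform_mem (i : ℕ) (r : List ℕ) : uform i r ∈ UM := by
  refine ⟨(i + 1) :: r.map (· + 1), by simp, ?_, ?_⟩
  · intro j hj
    simp at hj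
    rcases hj with h | ⟨x, _, h⟩ <;> omega
  · rw [inter_prod, List.map_map]
    rfl

lemma mem_UM_iff (u : WM) : u ∈ UM ↔ ∃ i r, u = uform i r := by
  constructor
  · rintro ⟨l, hne, hge, rfl⟩
    cases l with
    | nil => exact absurd rfl hne
    | cons n r =>
      refine ⟨n - 1, r.map (· - 1), ?_⟩
      rw [inter_prod]
      have h1 : a ^ n = a ^ ((n - 1) + 1) := by
        have := hge n (by simp)
        congr 1
        omega
      have h2 : r.map (fun j => b * a ^ j) =
          (r.map (· - 1)).map (fun j => b * a ^ (j + 1)) := by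
        rw [List.map_map]
        apply List.map_congr_left
        intro x hx
        have := hge x (by simp [hx])
        simp only [Function.comp]
        congr 2
        omega
      rw [h1, h2, uform]
  · rintro ⟨i, r, rfl⟩
    exact uform_mem i r

lemma decode_mem (z : T) : decode z ∈ NM := by
  cases z with
  | L n => exact Or.inl ⟨n, rfl⟩
  | R s i r t =>
    cases t with
    | zero =>
      exact Or.inr (Or.inl ⟨s, uform i r, uform_mem i r, by simp [decode]⟩)
    | succ t =>
      exact Or.inr (Or.inr ⟨s, t + 1, uform i r, uform_mem i r, Nat.succ_pos t, rfl⟩)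

lemma mk'_eq {c : Con WM} {x y : WM} (h : c x y) : c.mk' x = c.mk' y := Quotient.sound' h

lemma eq_mk' {c : Con WM} {x y : WM} (h : c.mk' x = c.mk' y) : c x y := Quotient.exact' h

lemma rel_abs (s : ℕ) (hs : 1 ≤ s) : (conGen rM) (a * b ^ s * a) (a * b * a) := by
  rcases Nat.lt_or_ge s 2 with h | h
  · have hs1 : s = 1 := by omega
    subst hs1
    simpa [pow_one] using (conGen rM).refl (a * b * a)
  · exact ConGen.Rel.of _ _ ⟨s, h, rfl, rfl⟩

lemma decode_mul_rep (x : AB) (y : T) :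
    (conGen rM).mk' (decode (phi (.of x) * y)) = (conGen rM).mk' (.of x * decode y) := by
  cases x with
  | b =>
    have hb : phi (FreeMonoid.of AB.b) = T.L 1 := phi_b
    have hb' : (FreeMonoid.of AB.b : WM) = b := rfl
    rw [hb, hb']
    cases y with
    | L n =>
      congr 1
      show b ^ (1 + n) = b * b ^ n
      rw [add_comm 1 n, pow_succ']
    | R s i r t =>
      congr 1
      show b ^ (1 + s) * uform i r * b ^ t = b * (b ^ s * uform i r * b ^ t)
      rw [add_comm 1 s, pow_succ']
      simp only [mul_assoc]
  | a =>
    have ha : phi (FreeMonoid.of AB.a) = T.R 0 0 [] 0 := phi_a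
    have ha' : (FreeMonoid.of AB.a : WM) = a := rfl
    rw [ha, ha']
    cases y with
    | L n =>
      congr 1
      simp [decode, uform, pow_succ']
    | R s i r t =>
      cases s with
      | zero =>
        congr 1
        simp [decode, G, uform, pow_succ', mul_assoc]
      | succ s =>
        have hG : T.R 0 0 [] 0 * T.R (s + 1) i r t = T.R 0 0 (i :: r) t := by
          simp [G]
        rw [hG]
        have e1 : decode (T.R 0 0 (i :: r) t) =
            (a * b * a) * (a ^ i * ((r.map fun j => b * a ^ (j + 1)).prod * b ^ t)) := by
          show b ^ 0 * uform 0 (i :: r) * b ^ t = _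
          rw [pow_zero, one_mul, uform_cons, pow_one, uform, pow_succ' a i]
          simp only [mul_assoc]
        have e2 : (a : WM) * decode (T.R (s + 1) i r t) =
            (a * b ^ (s + 1) * a) * (a ^ i * ((r.map fun j => b * a ^ (j + 1)).prod * b ^ t)) := by
          show a * (b ^ (s + 1) * uform i r * b ^ t) = _
          rw [uform, pow_succ' a i]
          simp only [mul_assoc]
        rw [e1, e2]
        exact mk'_eq ((conGen rM).mul ((conGen rM).symm (rel_abs (s + 1) (by omega)))
          ((conGen rM).refl _))

lemma rep (w : WM) : (conGen rM).mk' (decode (phi w)) = (conGen rM).mk' w := by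
  induction w using FreeMonoid.inductionOn' with
  | one =>
    rw [map_one]
    have : (1 : T) = T.L 0 := rfl
    rw [this]
    simp [decode]
  | of_mul x w ih =>
    rw [map_mul, decode_mul_rep x (phi w), map_mul, map_mul, ih]

lemma decode_phi_of_mem {w : WM} (hw : w ∈ NM) : decode (phi w) = w := by
  rcases hw with ⟨s, rfl⟩ | ⟨s, u, hu, rfl⟩ | ⟨s, t, u, hu, ht, rfl⟩
  · simp [decode]
  · obtain ⟨i, r, rfl⟩ := (mem_UM_iff u).mp hu
    rw [map_mul, phi_bpow, phi_uform]
    simp [decode]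
  · obtain ⟨i, r, rfl⟩ := (mem_UM_iff u).mp hu
    rw [map_mul, map_mul, phi_bpow, phi_bpow, phi_uform]
    simp [decode]

lemma conGen_le_ker : conGen rM ≤ Con.ker phi := by
  apply Con.conGen_le.mpr
  rintro x y ⟨n, hn, rfl, rfl⟩
  rw [Con.ker_rel]
  have hn' : n ≠ 0 := by omega
  simp [map_mul, G, hn']

end Stmt8

/-- Every element of `M` is represented by exactly one word in `N_M`. -/
theorem stmt8 (x : (conGen rM).Quotient) :
    ∃! w : WM, w ∈ NM ∧ (conGen rM).mk' w = x := by
  obtain ⟨w, rfl⟩ := Con.mk'_surjective x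
  refine ⟨Stmt8.decode (Stmt8.phi w), ⟨Stmt8.decode_mem _, Stmt8.rep w⟩, ?_⟩
  rintro y ⟨hy, hmk⟩
  have h1 : (conGen rM).mk' y = (conGen rM).mk' (Stmt8.decode (Stmt8.phi w)) := by
    rw [hmk, Stmt8.rep w]
  have h2 : Stmt8.phi y = Stmt8.phi (Stmt8.decode (Stmt8.phi w)) :=
    (Con.ker_rel Stmt8.phi).mp (Stmt8.conGen_le_ker (Stmt8.eq_mk' h1))
  calc y = Stmt8.decode (Stmt8.phi y) := (Stmt8.decode_phi_of_mem hy).symm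
    _ = Stmt8.decode (Stmt8.phi (Stmt8.decode (Stmt8.phi w))) := by rw [h2]
    _ = Stmt8.decode (Stmt8.phi w) := Stmt8.decode_phi_of_mem (Stmt8.decode_mem _)
end

section
/- Every element of the monoid N = ⟨c, d | cdc = cd²c = cd⁴ = cd³c² = cd³cdc⟩ is represented by exactly one word in the set N_N = {d^p, d^p v, d^p v (d³c)^q d^r : v ∈ U_N, p, q ≥ 0, 0 ≤ r ≤ 3, q + r > 0}, where U_N = {c^{i₀} d c^{i₁} d ⋯ d c^{i_k} : k ≥ 0, all i_j ≥ 1}. -/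
open Relation

/-! ### Auxiliary development -/


lemma rule1 : rN (c*d^2*c) (c*d*c) := ⟨.inl rfl, rfl⟩
lemma rule2 : rN (c*d^4) (c*d*c) := ⟨.inr (.inl rfl), rfl⟩
lemma rule3 : rN (c*d^3*c^2) (c*d*c) := ⟨.inr (.inr (.inl rfl)), rfl⟩
lemma rule4 : rN (c*d^3*(c*d*c)) (c*d*c) := ⟨.inr (.inr (.inr rfl)), rfl⟩

lemma one_step {u v : WN} (h : rN u v) (x y : WN) : ConGen.Rel rN (x*u*y) (x*v*y) :=
  .mul (.mul (.refl x) (.of _ _ h)) (.refl y)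

lemma cg_of_eq {x x' y' y : WN} (h1 : x = x') (h : ConGen.Rel rN x' y') (h2 : y' = y) :
    ConGen.Rel rN x y := h1 ▸ h2 ▸ h

lemma comm1 (q : ℕ) : c * (d^3*c)^q = (c*d^3)^q * c := by
  induction q with
  | zero => simp
  | succ q ih =>
    rw [pow_succ (d^3*c) q, pow_succ (c*d^3) q, ← mul_assoc, ih]; simp [mul_assoc]

lemma lemA (q : ℕ) : ConGen.Rel rN (c * (d^3*c)^q * d * c) (c*d*c) := by
  induction q with
  | zero => exact cg_of_eq (by simp) (ConGen.Rel.refl _) rfl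
  | succ q ih =>
    have e := one_step rule4 ((c*d^3)^q) 1
    have h1 : c * (d^3*c)^(q+1) * d * c = (c*d^3)^q * (c*d^3*(c*d*c)) * 1 := by
      rw [comm1 (q+1), pow_succ (c*d^3) q]; simp [mul_assoc]
    have h2 : (c*d^3)^q * (c*d*c) * 1 = c * (d^3*c)^q * d * c := by
      rw [comm1]; simp [mul_assoc]
    exact ConGen.Rel.trans (cg_of_eq h1 e h2) ih

lemma lemB (q r : ℕ) (h : r = 1 ∨ r = 2 ∨ (r = 0 ∧ 0 < q)) :
    ConGen.Rel rN (c * (d^3*c)^q * d^r * c) (c*d*c) := by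
  rcases h with rfl | rfl | ⟨rfl, hq⟩
  · exact cg_of_eq (by simp) (lemA q) rfl
  · have h1 : c * (d^3*c)^q * d^2 * c = (c*d^3)^q * (c*d^2*c) * 1 := by
      rw [comm1]; simp [mul_assoc]
    have h2 : (c*d^3)^q * (c*d*c) * 1 = c * (d^3*c)^q * d * c := by
      rw [comm1]; simp [mul_assoc]
    exact ConGen.Rel.trans (cg_of_eq h1 (one_step rule1 ((c*d^3)^q) 1) h2) (lemA q)
  · obtain ⟨q, rfl⟩ : ∃ q', q = q' + 1 := ⟨q - 1, by omega⟩
    have h1 : c * (d^3*c)^(q+1) * d^0 * c = (c*d^3)^q * (c*d^3*c^2) * 1 := by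
      rw [comm1 (q+1), pow_succ (c*d^3) q]; simp [mul_assoc, pow_succ, pow_zero]
    have h2 : (c*d^3)^q * (c*d*c) * 1 = c * (d^3*c)^q * d * c := by
      rw [comm1]; simp [mul_assoc]
    exact ConGen.Rel.trans (cg_of_eq h1 (one_step rule3 ((c*d^3)^q) 1) h2) (lemA q)

lemma lemD4 (q : ℕ) : ConGen.Rel rN (c * (d^3*c)^q * d^4) (c*d*c) := by
  have h1 : c * (d^3*c)^q * d^4 = (c*d^3)^q * (c*d^4) * 1 := by
    rw [comm1]; simp [mul_assoc]
  have h2 : (c*d^3)^q * (c*d*c) * 1 = c * (d^3*c)^q * d * c := by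
    rw [comm1]; simp [mul_assoc]
  exact ConGen.Rel.trans (cg_of_eq h1 (one_step rule2 ((c*d^3)^q) 1) h2) (lemA q)

/-! ### Normal form data -/

abbrev NF := ℕ ⊕ (ℕ × List ℕ × ℕ × ℕ)

def headBump : List ℕ → List ℕ
  | [] => [1]
  | i :: t => (i+1) :: t

def mulC : NF → NF
  | .inl p => .inr (p, [1], 0, 0)
  | .inr (p, l, q, r) =>
    if r = 3 then .inr (p, l, q+1, 0)
    else if r = 0 ∧ q = 0 then .inr (p, headBump l, 0, 0)
    else .inr (p, 1 :: l, 0, 0)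

def mulD : NF → NF
  | .inl p => .inl (p+1)
  | .inr (p, l, q, r) =>
    if r = 3 then .inr (p, 1 :: l, 0, 0) else .inr (p, l, q, r+1)

def nstep (s : NF) (x : CD) : NF := match x with | .c => mulC s | .d => mulD s

def PhiF (s : NF) (w : WN) : NF := (FreeMonoid.toList w).foldl nstep s

lemma PhiF_mul (s : NF) (x y : WN) : PhiF s (x * y) = PhiF (PhiF s x) y := by
  simp [PhiF, FreeMonoid.toList_mul]
lemma PhiF_c (s : NF) : PhiF s c = mulC s := rfl
lemma PhiF_d (s : NF) : PhiF s d = mulD s := rfl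
lemma PhiF_pow_d (s : NF) (n : ℕ) : PhiF s (d ^ n) = mulD^[n] s := by
  induction n generalizing s with
  | zero => rfl
  | succ n ih => rw [pow_succ', PhiF_mul, PhiF_d, ih, Function.iterate_succ_apply]
lemma PhiF_pow_c (s : NF) (n : ℕ) : PhiF s (c ^ n) = mulC^[n] s := by
  induction n generalizing s with
  | zero => rfl
  | succ n ih => rw [pow_succ', PhiF_mul, PhiF_c, ih, Function.iterate_succ_apply]

lemma phi_rel {u v : WN} (h : rN u v) (s : NF) : PhiF s u = PhiF s v := by
  obtain ⟨h, rfl⟩ := h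
  rcases h with rfl | rfl | rfl | rfl <;>
  · rcases s with p | ⟨p, l, q, r⟩
    · rfl
    · simp only [PhiF_mul, PhiF_c, PhiF_d, PhiF_pow_d, PhiF_pow_c, Function.iterate_succ,
        Function.iterate_zero, Function.comp_apply, id_eq, mulC, mulD]
      split_ifs <;> simp_all [mulC, mulD, headBump]

lemma phi_congr {x y : WN} (h : ConGen.Rel rN x y) : ∀ s, PhiF s x = PhiF s y := by
  induction h with
  | of u v h => exact phi_rel h
  | refl => exact fun _ => rfl
  | symm _ ih => exact fun s => (ih s).symm
  | trans _ _ ih1 ih2 => exact fun s => (ih1 s).trans (ih2 s)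
  | mul _ _ ih1 ih2 => intro s; rw [PhiF_mul, PhiF_mul, ih1, ih2]

/-! ### Readback -/

def V : List ℕ → WN
  | [] => 1
  | [i] => c ^ i
  | i :: j :: t => V (j :: t) * d * c ^ i

def rho : NF → WN
  | .inl p => d ^ p
  | .inr (p, l, q, r) => d ^ p * V l * (d ^ 3 * c) ^ q * d ^ r

def Valid : NF → Prop
  | .inl _ => True
  | .inr (_, l, _, r) => l ≠ [] ∧ (∀ i ∈ l, 1 ≤ i) ∧ r ≤ 3

lemma valid_mulC {s : NF} (h : Valid s) : Valid (mulC s) := by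
  rcases s with p | ⟨p, l, q, r⟩
  · exact ⟨by simp, by simp, by omega⟩
  · obtain ⟨h1, h2, h3⟩ := h
    simp only [mulC]
    split_ifs with hr hq
    · exact ⟨h1, h2, by omega⟩
    · rcases l with _ | ⟨i, t⟩
      · exact absurd rfl h1
      · refine ⟨by simp [headBump], ?_, by omega⟩
        intro j hj
        simp only [headBump, List.mem_cons] at hj
        rcases hj with rfl | hj
        · omega
        · exact h2 j (List.mem_cons_of_mem _ hj)
    · refine ⟨by simp, ?_, by omega⟩
      intro j hj
      rcases List.mem_cons.1 hj with rfl | hj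
      · omega
      · exact h2 j hj

lemma valid_mulD {s : NF} (h : Valid s) : Valid (mulD s) := by
  rcases s with p | ⟨p, l, q, r⟩
  · trivial
  · obtain ⟨h1, h2, h3⟩ := h
    simp only [mulD]
    split_ifs with hr
    · refine ⟨by simp, ?_, by omega⟩
      intro j hj
      rcases List.mem_cons.1 hj with rfl | hj
      · omega
      · exact h2 j hj
    · exact ⟨h1, h2, by omega⟩

lemma V_split {l : List ℕ} (hl : l ≠ []) (h1 : ∀ i ∈ l, 1 ≤ i) : ∃ y, V l = y * c := by
  rcases l with _ | ⟨i, t⟩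
  · exact absurd rfl hl
  · have hi : 1 ≤ i := h1 i (by simp)
    obtain ⟨i', rfl⟩ : ∃ i', i = i' + 1 := ⟨i - 1, by omega⟩
    rcases t with _ | ⟨j, t⟩
    · exact ⟨c ^ i', by simp [V, pow_succ]⟩
    · exact ⟨V (j :: t) * d * c ^ i', by simp [V, pow_succ, mul_assoc]⟩

lemma V_cons (i : ℕ) {l : List ℕ} (hl : l ≠ []) : V (i :: l) = V l * d * c ^ i := by
  rcases l with _ | ⟨j, t⟩
  · exact absurd rfl hl
  · rfl

lemma V_bump {l : List ℕ} (hl : l ≠ []) : V (headBump l) = V l * c := by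
  rcases l with _ | ⟨i, t⟩
  · exact absurd rfl hl
  · rcases t with _ | ⟨j, t⟩
    · simp [headBump, V, pow_succ]
    · simp [headBump, V, pow_succ, mul_assoc]

lemma rho_mulC {s : NF} (h : Valid s) : ConGen.Rel rN (rho s * c) (rho (mulC s)) := by
  rcases s with p | ⟨p, l, q, r⟩
  · exact cg_of_eq rfl (ConGen.Rel.refl _) (by simp [rho, mulC, V])
  · obtain ⟨h1, h2, h3⟩ := h
    simp only [mulC]
    split_ifs with hr hq
    · subst hr
      exact cg_of_eq rfl (ConGen.Rel.refl _) (by simp [rho, pow_succ, mul_assoc])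
    · obtain ⟨hr0, hq0⟩ := hq
      subst hr0; subst hq0
      exact cg_of_eq rfl (ConGen.Rel.refl _) (by simp [rho, V_bump h1, mul_assoc])
    · obtain ⟨y, hy⟩ := V_split h1 h2
      have hcase : r = 1 ∨ r = 2 ∨ (r = 0 ∧ 0 < q) := by
        rcases Decidable.em (r = 0) with h0 | h0
        · right; right; exact ⟨h0, by omega⟩
        · omega
      refine cg_of_eq ?_ (ConGen.Rel.mul (ConGen.Rel.refl (d^p * y)) (lemB q r hcase)) ?_
      · simp [rho, hy, mul_assoc]
      · simp [rho, V_cons 1 h1, hy, mul_assoc, pow_one]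

lemma rho_mulD {s : NF} (h : Valid s) : ConGen.Rel rN (rho s * d) (rho (mulD s)) := by
  rcases s with p | ⟨p, l, q, r⟩
  · exact cg_of_eq rfl (ConGen.Rel.refl _) (by simp [rho, mulD, pow_succ])
  · obtain ⟨h1, h2, h3⟩ := h
    simp only [mulD]
    split_ifs with hr
    · subst hr
      obtain ⟨y, hy⟩ := V_split h1 h2
      refine cg_of_eq ?_ (ConGen.Rel.mul (ConGen.Rel.refl (d^p * y)) (lemD4 q)) ?_
      · simp [rho, hy, mul_assoc, pow_succ]
      · simp [rho, V_cons 1 h1, hy, mul_assoc, pow_one]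
    · exact cg_of_eq rfl (ConGen.Rel.refl _) (by simp [rho, pow_succ, mul_assoc])

lemma valid_foldl : ∀ (L : List CD) (s : NF), Valid s → Valid (L.foldl nstep s) := by
  intro L
  induction L with
  | nil => exact fun s h => h
  | cons x L ih =>
    intro s hs
    refine ih _ ?_
    cases x
    · exact valid_mulC hs
    · exact valid_mulD hs

lemma valid_PhiF {s : NF} (h : Valid s) (w : WN) : Valid (PhiF s w) :=
  valid_foldl _ _ h

lemma cong_PhiF : ∀ (L : List CD) (s : NF), Valid s →
    ConGen.Rel rN (rho s * FreeMonoid.ofList L) (rho (L.foldl nstep s)) := by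
  intro L
  induction L with
  | nil => intro s _; exact cg_of_eq (by simp) (ConGen.Rel.refl _) rfl
  | cons x L ih =>
    intro s hs
    have step1 : ConGen.Rel rN (rho s * FreeMonoid.of x) (rho (nstep s x)) := by
      cases x
      · exact rho_mulC hs
      · exact rho_mulD hs
    have hv : Valid (nstep s x) := by
      cases x
      · exact valid_mulC hs
      · exact valid_mulD hs
    refine ConGen.Rel.trans (cg_of_eq ?_ (ConGen.Rel.mul step1 (ConGen.Rel.refl (FreeMonoid.ofList L))) rfl) (ih _ hv)
    rw [FreeMonoid.ofList_cons, ← mul_assoc]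

def Phi (w : WN) : NF := PhiF (.inl 0) w

lemma cong_Phi (w : WN) : ConGen.Rel rN w (rho (Phi w)) := by
  have := cong_PhiF (FreeMonoid.toList w) (.inl 0) trivial
  simpa [rho, FreeMonoid.ofList_toList, PhiF, Phi] using this

lemma valid_inl (p : ℕ) : Valid (Sum.inl p : NF) := trivial

lemma valid_Phi (w : WN) : Valid (Phi w) := valid_PhiF (valid_inl 0) w

/-! ### NN membership of readbacks -/

def W (m : List ℕ) : WN := ((m.map (c ^ ·)).intersperse d).prod

lemma W_append {m : List ℕ} (hm : m ≠ []) (i : ℕ) : W (m ++ [i]) = W m * d * c ^ i := by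
  induction m with
  | nil => exact absurd rfl hm
  | cons j m ih =>
    rcases m with _ | ⟨k, m⟩
    · simp [W, List.intersperse, mul_assoc]
    · have := ih (by simp)
      simp only [W, List.cons_append, List.map_cons, List.intersperse_cons_cons,
        List.prod_cons] at this ⊢
      rw [this]
      simp [mul_assoc]

lemma V_eq_W {l : List ℕ} (hl : l ≠ []) : V l = W l.reverse := by
  induction l with
  | nil => exact absurd rfl hl
  | cons i t ih =>
    rcases t with _ | ⟨j, t⟩
    · simp [V, W, List.intersperse]
    · rw [V_cons i (by simp), ih (by simp)]
      have : (i :: j :: t).reverse = (j :: t).reverse ++ [i] := by simp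
      rw [this, W_append (by simp) i]

lemma rho_mem_NN {s : NF} (h : Valid s) : rho s ∈ NN := by
  rcases s with p | ⟨p, l, q, r⟩
  · exact Or.inl ⟨p, rfl⟩
  · obtain ⟨h1, h2, h3⟩ := h
    have hUN : V l ∈ UN := by
      refine ⟨l.reverse, by simpa using h1, fun i hi => h2 i (List.mem_reverse.1 hi), ?_⟩
      exact V_eq_W h1
    rcases Decidable.em (q = 0 ∧ r = 0) with ⟨rfl, rfl⟩ | hqr
    · exact Or.inr (Or.inl ⟨p, V l, hUN, by simp [rho]⟩)
    · exact Or.inr (Or.inr ⟨p, q, r, V l, hUN, h3, by omega, rfl⟩)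

/-! ### Phi computes on normal forms -/

lemma Phi_d_pow (p : ℕ) : PhiF (.inl 0) (d ^ p) = .inl p := by
  rw [PhiF_pow_d]
  induction p with
  | zero => rfl
  | succ p ih => rw [Function.iterate_succ_apply', ih]; rfl

lemma Phi_c_pow_state (p : ℕ) (i : ℕ) (t : List ℕ) (k : ℕ) :
    PhiF (.inr (p, i :: t, 0, 0)) (c ^ k) = .inr (p, (i + k) :: t, 0, 0) := by
  rw [PhiF_pow_c]
  induction k with
  | zero => rfl
  | succ k ih =>
    rw [Function.iterate_succ_apply', ih]
    simp [mulC, headBump]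
    omega

lemma Phi_c_pow_inl (p k : ℕ) (hk : 1 ≤ k) :
    PhiF (.inl p) (c ^ k) = .inr (p, [k], 0, 0) := by
  obtain ⟨k', rfl⟩ : ∃ k', k = k' + 1 := ⟨k - 1, by omega⟩
  rw [show (k' + 1) = 1 + k' by omega, pow_add, PhiF_mul, pow_one, PhiF_c]
  show PhiF (.inr (p, [1], 0, 0)) (c ^ k') = _
  rw [Phi_c_pow_state, Nat.add_comm 1 k']

lemma Phi_dc_state (p : ℕ) (l : List ℕ) (i : ℕ) (hi : 1 ≤ i) :
    PhiF (.inr (p, l, 0, 0)) (d * c ^ i) = .inr (p, i :: l, 0, 0) := by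
  obtain ⟨i', rfl⟩ : ∃ i', i = i' + 1 := ⟨i - 1, by omega⟩
  rw [PhiF_mul, PhiF_d]
  have : mulD (.inr (p, l, 0, 0)) = .inr (p, l, 0, 1) := by simp [mulD]
  rw [this, show (i' + 1) = 1 + i' by omega, pow_add, PhiF_mul, pow_one, PhiF_c]
  have : mulC (.inr (p, l, 0, 1)) = .inr (p, 1 :: l, 0, 0) := by simp [mulC]
  rw [this, Phi_c_pow_state]

lemma Phi_W (p : ℕ) {m : List ℕ} (hm : m ≠ []) (h1 : ∀ i ∈ m, 1 ≤ i) :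
    PhiF (.inl p) (W m) = .inr (p, m.reverse, 0, 0) := by
  induction m using List.reverseRecOn with
  | nil => exact absurd rfl hm
  | append_singleton m i ih =>
    rcases Decidable.em (m = []) with rfl | hm'
    · simp only [List.nil_append]
      rw [show W [i] = c ^ i from by simp [W, List.intersperse], Phi_c_pow_inl p i (h1 i (by simp))]
      simp
    · rw [W_append hm' i, PhiF_mul, PhiF_mul,
        ih hm' (fun j hj => h1 j (by simp [hj])), ← PhiF_mul,
        Phi_dc_state p m.reverse i (h1 i (by simp))]
      simp

lemma Phi_T_pow (p : ℕ) (l : List ℕ) (q0 q : ℕ) :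
    PhiF (.inr (p, l, q0, 0)) ((d ^ 3 * c) ^ q) = .inr (p, l, q0 + q, 0) := by
  induction q generalizing q0 with
  | zero => rfl
  | succ q ih =>
    rw [pow_succ', PhiF_mul]
    have : PhiF (.inr (p, l, q0, 0)) (d ^ 3 * c) = .inr (p, l, q0 + 1, 0) := by
      rw [PhiF_mul, PhiF_pow_d, PhiF_c]
      show mulC (mulD (mulD (mulD (.inr (p, l, q0, 0))))) = _
      simp [mulC, mulD]
    rw [this, ih]
    have : q0 + 1 + q = q0 + (q + 1) := by omega
    rw [this]

lemma Phi_d_r (p : ℕ) (l : List ℕ) (q r : ℕ) (hr : r ≤ 3) :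
    PhiF (.inr (p, l, q, 0)) (d ^ r) = .inr (p, l, q, r) := by
  induction r with
  | zero => rfl
  | succ r ih =>
    rw [pow_succ, PhiF_mul, ih (by omega), PhiF_d]
    simp only [mulD]
    rw [if_neg (by omega)]

lemma rho_Phi_of_mem {w : WN} (h : w ∈ NN) : rho (Phi w) = w := by
  rcases h with ⟨p, rfl⟩ | ⟨p, v, ⟨m, hm, h1, rfl⟩, rfl⟩ | ⟨p, q, r, v, ⟨m, hm, h1, rfl⟩, hr, hqr, rfl⟩
  · rw [Phi] at *
    rw [Phi_d_pow]
    rfl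
  · rw [Phi, PhiF_mul, Phi_d_pow, show ((m.map (c ^ ·)).intersperse d).prod = W m from rfl,
      Phi_W p hm h1, rho]
    rw [V_eq_W (by simpa using hm), List.reverse_reverse]
    simp [W]
  · rw [Phi, PhiF_mul, PhiF_mul, PhiF_mul, Phi_d_pow,
      show ((m.map (c ^ ·)).intersperse d).prod = W m from rfl, Phi_W p hm h1,
      Phi_T_pow, Phi_d_r _ _ _ _ hr, rho]
    rw [V_eq_W (by simpa using hm), List.reverse_reverse]
    simp [W]

/-! ### Main theorem -/

/-- Every element of `N` is represented by exactly one word in `N_N`. -/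
theorem stmt9 (x : (conGen rN).Quotient) :
    ∃! w : WN, w ∈ NN ∧ (conGen rN).mk' w = x := by
  induction x using Con.induction_on with
  | _ w0 =>
    have hvalid := valid_Phi w0
    have hcong := cong_Phi w0
    refine ⟨rho (Phi w0), ⟨rho_mem_NN hvalid, ?_⟩, ?_⟩
    · change ((rho (Phi w0) : WN) : (conGen rN).Quotient) = (w0 : (conGen rN).Quotient)
      rw [Con.eq]
      exact hcong.symm
    · rintro w' ⟨hw', heq⟩
      have : (conGen rN) w' w0 := by
        rw [← Con.eq]
        exact heq
      have hphi : Phi w' = Phi w0 := phi_congr this _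
      rw [← rho_Phi_of_mem hw', hphi]
end

section
/- In the monoid N = ⟨c, d | cdc = cd²c = cd⁴ = cd³c² = cd³cdc⟩, for every v ∈ U_N and q ≥ 0, the equality v (d³c)^q d⁴ = v d c holds in N. -/
open Relation

lemma key (q : ℕ) : conGen rN (c * ((d ^ 3 * c) ^ q * d ^ 4)) (c * d * c) := by
  induction q with
  | zero =>
      have : c * ((d ^ 3 * c) ^ 0 * d ^ 4) = c * d ^ 4 := by simp
      rw [this]
      exact ConGen.Rel.of _ _ ⟨Or.inr (Or.inl rfl), rfl⟩
  | succ n ih =>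
      have h1 : c * ((d ^ 3 * c) ^ (n + 1) * d ^ 4)
          = (c * d ^ 3) * (c * ((d ^ 3 * c) ^ n * d ^ 4)) := by
        rw [pow_succ']; simp [mul_assoc]
      rw [h1]
      refine ConGen.Rel.trans (ConGen.Rel.mul (ConGen.Rel.refl _) ih) ?_
      exact ConGen.Rel.of _ _ ⟨Or.inr (Or.inr (Or.inr (by rw [mul_assoc]))), rfl⟩

lemma ends_c (l : List ℕ) (hne : l ≠ []) (h1 : ∀ i ∈ l, 1 ≤ i) :
    ∃ v', ((l.map (c ^ ·)).intersperse d).prod = v' * c := by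
  induction l with
  | nil => exact absurd rfl hne
  | cons i t ih =>
      cases t with
      | nil =>
          have hi : 1 ≤ i := h1 i (by simp)
          refine ⟨c ^ (i - 1), ?_⟩
          simp only [List.map, List.intersperse, List.prod_cons, List.prod_nil, mul_one]
          rw [← pow_succ, Nat.sub_add_cancel hi]
      | cons j t' =>
          obtain ⟨v', hv'⟩ := ih (by simp) (fun x hx => h1 x (List.mem_cons_of_mem _ hx))
          refine ⟨c ^ i * d * v', ?_⟩
          rw [List.map_cons, List.map_cons, List.intersperse_cons_cons, List.prod_cons,
            List.prod_cons]
          rw [List.map_cons] at hv'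
          rw [hv', ← mul_assoc, ← mul_assoc]

/-- In `N`, for `v ∈ U_N`, `q ≥ 0`: `v (d³c)^q d⁴ = v d c`. -/
theorem stmt12 (v : WN) (hv : v ∈ UN) (q : ℕ) :
    conGen rN (v * (d ^ 3 * c) ^ q * d ^ 4) (v * d * c) := by
  obtain ⟨l, hne, h1, hv⟩ := hv
  obtain ⟨v', hv'⟩ := ends_c l hne h1
  rw [hv, hv']
  have e1 : v' * c * (d ^ 3 * c) ^ q * d ^ 4 = v' * (c * ((d ^ 3 * c) ^ q * d ^ 4)) := by
    simp [mul_assoc]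
  have e2 : v' * c * d * c = v' * (c * d * c) := by simp [mul_assoc]
  rw [e1, e2]
  exact ConGen.Rel.mul (ConGen.Rel.refl _) (key q)
end

section
/- The map f from the normal forms of M to the normal forms of N defined by f(b^s) = d^s, f(b^s u) = d^s ū, and f(b^s u b^t) = d^s ū (d³c)^q d^r where t = 4q + r with 0 ≤ r ≤ 3, is a bijection from N_M onto N_N. Here ū denotes the word obtained from u by substituting a ↦ c and b ↦ d. -/
open Relation

/-! ### Auxiliary development -/

namespace Stmt13Aux

open List FreeMonoid

variable {α : Type}

/-- The word `x^{i₀} y x^{i₁} y ⋯ y x^{i_k}` as a list. -/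
def segG (x y : α) : List ℕ → List α
  | [] => []
  | [i] => List.replicate i x
  | i :: j :: t => List.replicate i x ++ y :: segG x y (j :: t)

/-- The word `(y³x)^q y^r` as a list. -/
def tlG (x y : α) : ℕ → ℕ → List α
  | 0, r => List.replicate r y
  | q + 1, r => y :: y :: y :: x :: tlG x y q r

/-- The encoding `y^s (segG l) (y³x)^q y^r`. -/
def encG (x y : α) (s : ℕ) (l : List ℕ) (q r : ℕ) : List α :=
  List.replicate s y ++ segG x y l ++ tlG x y q r

lemma seg_cons (x y : α) (i : ℕ) (t : List ℕ) :
    segG x y (i :: t) =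
      List.replicate i x ++ (if t.isEmpty then [] else y :: segG x y t) := by
  cases t <;> simp [segG]

lemma seg_head (x y : α) : ∀ (l : List ℕ), l ≠ [] → (∀ i ∈ l, 1 ≤ i) →
    ∃ w : List α, segG x y l = x :: w := by
  rintro (_ | ⟨i, t⟩) hne hpos
  · exact absurd rfl hne
  · have hi : 1 ≤ i := hpos i (by simp)
    obtain ⟨k, rfl⟩ : ∃ k, i = k + 1 := ⟨i - 1, by omega⟩
    refine ⟨List.replicate k x ++ (if t.isEmpty then [] else y :: segG x y t), ?_⟩
    rw [seg_cons]
    simp [List.replicate_succ]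

lemma tl_head {x y : α} (hxy : x ≠ y) (q r : ℕ) :
    (tlG x y q r).head? ≠ some x := by
  cases q with
  | zero => cases r <;> simp [tlG, List.replicate_succ, Ne.symm hxy]
  | succ q => simp [tlG, Ne.symm hxy]

lemma tl_tail_head {x y : α} (hxy : x ≠ y) (q r : ℕ) :
    (tlG x y q r).tail.head? ≠ some x := by
  cases q with
  | zero =>
    cases r with
    | zero => simp [tlG]
    | succ r => cases r <;> simp [tlG, List.replicate_succ, Ne.symm hxy]
  | succ q => simp [tlG, Ne.symm hxy]

lemma repl_cancel (x : α) : ∀ (p1 p2 : ℕ) (w1 w2 : List α),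
    List.replicate p1 x ++ w1 = List.replicate p2 x ++ w2 →
    w1.head? ≠ some x → w2.head? ≠ some x → p1 = p2 ∧ w1 = w2 := by
  intro p1
  induction p1 with
  | zero =>
    intro p2 w1 w2 h h1 h2
    cases p2 with
    | zero => simpa using h
    | succ p2 =>
      exfalso
      apply h1
      simp only [List.replicate_zero, List.nil_append] at h
      rw [h]
      simp [List.replicate_succ]
  | succ p1 ih =>
    intro p2 w1 w2 h h1 h2
    cases p2 with
    | zero =>
      exfalso
      apply h2
      simp only [List.replicate_zero, List.nil_append] at h
      rw [← h]
      simp [List.replicate_succ]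
    | succ p2 =>
      simp only [List.replicate_succ, List.cons_append, List.cons.injEq] at h
      obtain ⟨h3, h4⟩ := ih p2 w1 w2 h.2 h1 h2
      exact ⟨by omega, h4⟩

lemma tl_inj {x y : α} (hxy : x ≠ y) : ∀ (q1 q2 r1 r2 : ℕ),
    tlG x y q1 r1 = tlG x y q2 r2 → q1 = q2 ∧ r1 = r2 := by
  intro q1
  induction q1 with
  | zero =>
    intro q2 r1 r2 h
    cases q2 with
    | zero =>
      refine ⟨rfl, ?_⟩
      have := congrArg List.length h
      simpa [tlG] using this
    | succ q2 =>
      exfalso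
      have hx : x ∈ tlG x y 0 r1 := by rw [h]; simp [tlG]
      simp only [tlG] at hx
      exact hxy (List.eq_of_mem_replicate hx)
  | succ q1 ih =>
    intro q2 r1 r2 h
    cases q2 with
    | zero =>
      exfalso
      have hx : x ∈ tlG x y 0 r2 := by rw [← h]; simp [tlG]
      simp only [tlG] at hx
      exact hxy (List.eq_of_mem_replicate hx)
    | succ q2 =>
      simp only [tlG, List.cons.injEq, true_and] at h
      obtain ⟨h1, h2⟩ := ih q2 r1 r2 h
      exact ⟨by omega, h2⟩

lemma keyG {x y : α} (hxy : x ≠ y) : ∀ (l1 l2 : List ℕ) (q1 r1 q2 r2 : ℕ),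
    (∀ i ∈ l1, 1 ≤ i) → (∀ i ∈ l2, 1 ≤ i) →
    (l1 = [] → q1 = 0 ∧ r1 = 0) → (l2 = [] → q2 = 0 ∧ r2 = 0) →
    segG x y l1 ++ tlG x y q1 r1 = segG x y l2 ++ tlG x y q2 r2 →
    l1 = l2 ∧ q1 = q2 ∧ r1 = r2 := by
  intro l1
  induction l1 with
  | nil =>
    intro l2 q1 r1 q2 r2 hp1 hp2 hc1 hc2 h
    obtain ⟨rfl, rfl⟩ := hc1 rfl
    simp only [segG, tlG, List.replicate_zero, List.nil_append] at h
    cases l2 with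
    | nil =>
      obtain ⟨rfl, rfl⟩ := hc2 rfl
      exact ⟨rfl, rfl, rfl⟩
    | cons i t =>
      exfalso
      obtain ⟨w, hw⟩ := seg_head x y (i :: t) (by simp) hp2
      rw [hw] at h
      simp at h
  | cons i1 t1 ih =>
    intro l2 q1 r1 q2 r2 hp1 hp2 hc1 hc2 h
    cases l2 with
    | nil =>
      exfalso
      obtain ⟨rfl, rfl⟩ := hc2 rfl
      obtain ⟨w, hw⟩ := seg_head x y (i1 :: t1) (by simp) hp1
      rw [hw] at h
      simp only [segG, tlG, List.replicate_zero, List.nil_append, List.append_nil] at h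
      simp at h
    | cons i2 t2 =>
      rw [seg_cons, seg_cons, List.append_assoc, List.append_assoc] at h
      have hhead : ∀ (t : List ℕ) (q r : ℕ),
          ((if t.isEmpty then ([] : List α) else y :: segG x y t) ++ tlG x y q r).head? ≠
            some x := by
        intro t q r
        cases t with
        | nil => simpa using tl_head hxy q r
        | cons j t' => simp [Ne.symm hxy]
      obtain ⟨hi, hrest⟩ := repl_cancel x i1 i2 _ _ h (hhead t1 q1 r1) (hhead t2 q2 r2)
      cases t1 with
      | nil =>
        cases t2 with
        | nil =>
          simp at hrest
          obtain ⟨hq, hr⟩ := tl_inj hxy q1 q2 r1 r2 hrest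
          exact ⟨by rw [hi], hq, hr⟩
        | cons j2 t2' =>
          exfalso
          simp at hrest
          apply tl_tail_head hxy q1 r1
          rw [hrest]
          obtain ⟨w, hw⟩ := seg_head x y (j2 :: t2') (by simp)
            (fun i hi => hp2 i (List.mem_cons_of_mem _ hi))
          rw [hw]
          simp
      | cons j1 t1' =>
        cases t2 with
        | nil =>
          exfalso
          simp at hrest
          apply tl_tail_head hxy q2 r2
          rw [← hrest]
          obtain ⟨w, hw⟩ := seg_head x y (j1 :: t1') (by simp)
            (fun i hi => hp1 i (List.mem_cons_of_mem _ hi))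
          rw [hw]
          simp
        | cons j2 t2' =>
          simp at hrest
          obtain ⟨hl, hq, hr⟩ := ih (j2 :: t2') q1 r1 q2 r2
            (fun i hi => hp1 i (List.mem_cons_of_mem _ hi))
            (fun i hi => hp2 i (List.mem_cons_of_mem _ hi))
            (by simp) (by simp) hrest
          exact ⟨by rw [hi, hl], hq, hr⟩

lemma encG_inj {x y : α} (hxy : x ≠ y) (s1 s2 : ℕ) (l1 l2 : List ℕ) (q1 r1 q2 r2 : ℕ)
    (hp1 : ∀ i ∈ l1, 1 ≤ i) (hp2 : ∀ i ∈ l2, 1 ≤ i)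
    (hc1 : l1 = [] → q1 = 0 ∧ r1 = 0) (hc2 : l2 = [] → q2 = 0 ∧ r2 = 0)
    (h : encG x y s1 l1 q1 r1 = encG x y s2 l2 q2 r2) :
    s1 = s2 ∧ l1 = l2 ∧ q1 = q2 ∧ r1 = r2 := by
  have hhead : ∀ (l : List ℕ) (q r : ℕ), (∀ i ∈ l, 1 ≤ i) → (l = [] → q = 0 ∧ r = 0) →
      (segG x y l ++ tlG x y q r).head? ≠ some y := by
    intro l q r hp hc
    cases l with
    | nil =>
      obtain ⟨rfl, rfl⟩ := hc rfl
      simp [segG, tlG]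
    | cons i t =>
      obtain ⟨w, hw⟩ := seg_head x y (i :: t) (by simp) hp
      rw [hw]
      simp [hxy]
  unfold encG at h
  rw [List.append_assoc, List.append_assoc] at h
  obtain ⟨hs, hrest⟩ := repl_cancel y s1 s2 _ _ h
    (hhead l1 q1 r1 hp1 hc1) (hhead l2 q2 r2 hp2 hc2)
  obtain ⟨hl, hq, hr⟩ := keyG hxy l1 l2 q1 r1 q2 r2 hp1 hp2 hc1 hc2 hrest
  exact ⟨hs, hl, hq, hr⟩

lemma toList_injective {w z : FreeMonoid α} (h : w.toList = z.toList) : w = z := by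
  rw [← FreeMonoid.ofList_toList w, ← FreeMonoid.ofList_toList z, h]

lemma toList_pow (z : α) (n : ℕ) :
    (FreeMonoid.of z ^ n).toList = List.replicate n z := by
  induction n with
  | zero => rfl
  | succ n ih =>
    rw [pow_succ, FreeMonoid.toList_mul, ih, FreeMonoid.toList_of, List.replicate_succ']

lemma toList_bpow (n : ℕ) : ((b : WM) ^ n).toList = List.replicate n AB.b := toList_pow AB.b n

lemma toList_dpow (n : ℕ) : ((d : WN) ^ n).toList = List.replicate n CD.d := toList_pow CD.d n

lemma hab : AB.a ≠ AB.b := fun h => nomatch h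
lemma hcd : CD.c ≠ CD.d := fun h => nomatch h

lemma seg_prod (x : α) (y : α) : ∀ l : List ℕ, l ≠ [] →
    (((l.map (FreeMonoid.of x ^ ·)).intersperse (FreeMonoid.of y)).prod).toList = segG x y l
  | [], h => absurd rfl h
  | [i], _ => by
    simp [segG, toList_pow]
  | i :: j :: t, _ => by
    have h2 := seg_prod x y (j :: t) (by simp)
    rw [List.map_cons] at h2
    rw [List.map_cons, List.map_cons, List.intersperse_cons_cons, List.prod_cons,
      List.prod_cons, FreeMonoid.toList_mul, FreeMonoid.toList_mul, FreeMonoid.toList_of,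
      toList_pow, h2]
    simp [segG]

lemma UM_iff (u : WM) : u ∈ UM ↔
    ∃ l : List ℕ, l ≠ [] ∧ (∀ i ∈ l, 1 ≤ i) ∧ u.toList = segG AB.a AB.b l := by
  constructor
  · rintro ⟨l, h1, h2, rfl⟩
    exact ⟨l, h1, h2, seg_prod AB.a AB.b l h1⟩
  · rintro ⟨l, h1, h2, h3⟩
    exact ⟨l, h1, h2, toList_injective (h3.trans (seg_prod AB.a AB.b l h1).symm)⟩

lemma UN_iff (v : WN) : v ∈ UN ↔
    ∃ l : List ℕ, l ≠ [] ∧ (∀ i ∈ l, 1 ≤ i) ∧ v.toList = segG CD.c CD.d l := by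
  constructor
  · rintro ⟨l, h1, h2, rfl⟩
    exact ⟨l, h1, h2, seg_prod CD.c CD.d l h1⟩
  · rintro ⟨l, h1, h2, h3⟩
    exact ⟨l, h1, h2, toList_injective (h3.trans (seg_prod CD.c CD.d l h1).symm)⟩

lemma tl_prod (q r : ℕ) : (((d : WN) ^ 3 * c) ^ q * d ^ r).toList = tlG CD.c CD.d q r := by
  induction q with
  | zero => simp [tlG, toList_dpow]
  | succ q ih =>
    rw [pow_succ', mul_assoc, FreeMonoid.toList_mul, ih, FreeMonoid.toList_mul, toList_dpow]
    rfl

lemma encM_eq (s : ℕ) (l : List ℕ) (t : ℕ) (u : WM) (hu : u.toList = segG AB.a AB.b l) :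
    ((b : WM) ^ s * u * b ^ t).toList = encG AB.a AB.b s l 0 t := by
  rw [FreeMonoid.toList_mul, FreeMonoid.toList_mul, toList_bpow, toList_bpow, hu]
  simp [encG, tlG]

lemma encN_eq (p : ℕ) (l : List ℕ) (q r : ℕ) (v : WN) (hv : v.toList = segG CD.c CD.d l) :
    ((d : WN) ^ p * v * (d ^ 3 * c) ^ q * d ^ r).toList = encG CD.c CD.d p l q r := by
  rw [mul_assoc, FreeMonoid.toList_mul, FreeMonoid.toList_mul, toList_dpow, tl_prod, hv]
  simp [encG]

lemma NM_iff (w : WM) : w ∈ NM ↔ ∃ s l t, (∀ i ∈ l, 1 ≤ i) ∧ (l = [] → t = 0) ∧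
    w.toList = encG AB.a AB.b s l 0 t := by
  constructor
  · rintro (⟨s, rfl⟩ | ⟨s, u, hu, rfl⟩ | ⟨s, t, u, hu, ht, rfl⟩)
    · refine ⟨s, [], 0, by simp, fun _ => rfl, ?_⟩
      rw [toList_bpow]
      simp [encG, segG, tlG]
    · obtain ⟨l, h1, h2, h3⟩ := (UM_iff u).1 hu
      refine ⟨s, l, 0, h2, fun _ => rfl, ?_⟩
      have := encM_eq s l 0 u h3
      simpa using this
    · obtain ⟨l, h1, h2, h3⟩ := (UM_iff u).1 hu
      exact ⟨s, l, t, h2, fun hl => absurd hl h1, encM_eq s l t u h3⟩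
  · rintro ⟨s, l, t, h1, h2, h3⟩
    cases l with
    | nil =>
      left
      refine ⟨s, toList_injective ?_⟩
      rw [h3, h2 rfl, toList_bpow]
      simp [encG, segG, tlG]
    | cons i l' =>
      have hu : FreeMonoid.ofList (segG AB.a AB.b (i :: l')) ∈ UM :=
        (UM_iff _).2 ⟨i :: l', by simp, h1, rfl⟩
      rcases Nat.eq_zero_or_pos t with rfl | ht
      · right; left
        refine ⟨s, _, hu, toList_injective ?_⟩
        rw [h3]
        have := encM_eq s (i :: l') 0 _ (FreeMonoid.toList_ofList _)
        simpa using this.symm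
      · right; right
        exact ⟨s, t, _, hu, ht, toList_injective (h3.trans
          (encM_eq s (i :: l') t _ (FreeMonoid.toList_ofList _)).symm)⟩

lemma NN_iff (w : WN) : w ∈ NN ↔ ∃ p l q r, (∀ i ∈ l, 1 ≤ i) ∧ r ≤ 3 ∧
    (l = [] → q = 0 ∧ r = 0) ∧ w.toList = encG CD.c CD.d p l q r := by
  constructor
  · rintro (⟨p, rfl⟩ | ⟨p, v, hv, rfl⟩ | ⟨p, q, r, v, hv, hr, hqr, rfl⟩)
    · refine ⟨p, [], 0, 0, by simp, by omega, fun _ => ⟨rfl, rfl⟩, ?_⟩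
      rw [toList_dpow]
      simp [encG, segG, tlG]
    · obtain ⟨l, h1, h2, h3⟩ := (UN_iff v).1 hv
      refine ⟨p, l, 0, 0, h2, by omega, fun _ => ⟨rfl, rfl⟩, ?_⟩
      have := encN_eq p l 0 0 v h3
      simpa using this
    · obtain ⟨l, h1, h2, h3⟩ := (UN_iff v).1 hv
      exact ⟨p, l, q, r, h2, hr, fun hl => absurd hl h1, encN_eq p l q r v h3⟩
  · rintro ⟨p, l, q, r, h1, hr, h2, h3⟩
    cases l with
    | nil =>
      left
      refine ⟨p, toList_injective ?_⟩
      obtain ⟨rfl, rfl⟩ := h2 rfl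
      rw [h3, toList_dpow]
      simp [encG, segG, tlG]
    | cons i l' =>
      have hv : FreeMonoid.ofList (segG CD.c CD.d (i :: l')) ∈ UN :=
        (UN_iff _).2 ⟨i :: l', by simp, h1, rfl⟩
      rcases Nat.eq_zero_or_pos (q + r) with hqr | hqr
      · right; left
        obtain ⟨rfl, rfl⟩ : q = 0 ∧ r = 0 := by omega
        refine ⟨p, _, hv, toList_injective ?_⟩
        rw [h3]
        have := encN_eq p (i :: l') 0 0 _ (FreeMonoid.toList_ofList _)
        simpa using this.symm
      · right; right
        exact ⟨p, q, r, _, hv, hr, hqr, toList_injective (h3.trans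
          (encN_eq p (i :: l') q r _ (FreeMonoid.toList_ofList _)).symm)⟩

open Classical in
/-- The bijection. -/
noncomputable def f0 : WM → WN := fun w =>
  if h : ∃ p : ℕ × List ℕ × ℕ, (∀ i ∈ p.2.1, 1 ≤ i) ∧ (p.2.1 = [] → p.2.2 = 0) ∧
      w.toList = encG AB.a AB.b p.1 p.2.1 0 p.2.2 then
    FreeMonoid.ofList
      (encG CD.c CD.d h.choose.1 h.choose.2.1 (h.choose.2.2 / 4) (h.choose.2.2 % 4))
  else 1

lemma f0_eq (w : WM) (s : ℕ) (l : List ℕ) (t : ℕ) (h1 : ∀ i ∈ l, 1 ≤ i)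
    (h2 : l = [] → t = 0) (h3 : w.toList = encG AB.a AB.b s l 0 t) :
    f0 w = FreeMonoid.ofList (encG CD.c CD.d s l (t / 4) (t % 4)) := by
  have hex : ∃ p : ℕ × List ℕ × ℕ, (∀ i ∈ p.2.1, 1 ≤ i) ∧ (p.2.1 = [] → p.2.2 = 0) ∧
      w.toList = encG AB.a AB.b p.1 p.2.1 0 p.2.2 := ⟨(s, l, t), h1, h2, h3⟩
  obtain ⟨c1, c2, c3⟩ := hex.choose_spec
  obtain ⟨hs, hl, -, ht⟩ := encG_inj hab hex.choose.1 s hex.choose.2.1 l 0 hex.choose.2.2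
    0 t c1 h1 (fun h => ⟨rfl, c2 h⟩) (fun h => ⟨rfl, h2 h⟩) (c3.symm.trans h3)
  simp only [f0, dif_pos hex]
  rw [hs, hl, ht]

lemma bar_toList (u : WM) :
    (bar u).toList = u.toList.map (fun x => match x with | AB.a => CD.c | AB.b => CD.d) := rfl

lemma map_seg : ∀ l : List ℕ,
    (segG AB.a AB.b l).map (fun x => match x with | AB.a => CD.c | AB.b => CD.d) =
      segG CD.c CD.d l
  | [] => rfl
  | [i] => by simp [segG]
  | i :: j :: t => by
    simp only [segG, List.map_append, List.map_cons, map_seg (j :: t), List.map_replicate]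

lemma bar_seg (u : WM) (l : List ℕ) (hu : u.toList = segG AB.a AB.b l) :
    (bar u).toList = segG CD.c CD.d l := by
  rw [bar_toList, hu, map_seg]

lemma f0_form (s : ℕ) (l : List ℕ) (t : ℕ) (u : WM) (h1 : ∀ i ∈ l, 1 ≤ i)
    (h2 : l = [] → t = 0) (hu : u.toList = segG AB.a AB.b l) :
    f0 (b ^ s * u * b ^ t) = d ^ s * bar u * (d ^ 3 * c) ^ (t / 4) * d ^ (t % 4) := by
  rw [f0_eq _ s l t h1 h2 (encM_eq s l t u hu)]
  refine toList_injective ?_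
  rw [FreeMonoid.toList_ofList, encN_eq s l (t / 4) (t % 4) (bar u) (bar_seg u l hu)]

lemma f0_pow (s : ℕ) : f0 (b ^ s) = d ^ s := by
  have h3 : ((b : WM) ^ s).toList = encG AB.a AB.b s [] 0 0 := by
    rw [toList_bpow]; simp [encG, segG, tlG]
  rw [f0_eq _ s [] 0 (by simp) (fun _ => rfl) h3]
  refine toList_injective ?_
  rw [FreeMonoid.toList_ofList, toList_dpow]
  simp [encG, segG, tlG]

lemma f0_mid (s : ℕ) (u : WM) (hu : u ∈ UM) : f0 (b ^ s * u) = d ^ s * bar u := by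
  obtain ⟨l, h1, h2, h3⟩ := (UM_iff u).1 hu
  have := f0_form s l 0 u h2 (fun _ => rfl) h3
  simpa using this

lemma f0_top (s t : ℕ) (u : WM) (hu : u ∈ UM) (ht : 0 < t) :
    f0 (b ^ s * u * b ^ t) = d ^ s * bar u * (d ^ 3 * c) ^ (t / 4) * d ^ (t % 4) := by
  obtain ⟨l, h1, h2, h3⟩ := (UM_iff u).1 hu
  exact f0_form s l t u h2 (fun hl => absurd hl h1) h3

lemma f0_mapsTo : Set.MapsTo f0 NM NN := by
  intro w hw
  obtain ⟨s, l, t, h1, h2, h3⟩ := (NM_iff w).1 hw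
  rw [f0_eq w s l t h1 h2 h3]
  exact (NN_iff _).2 ⟨s, l, t / 4, t % 4, h1, by omega,
    fun hl => by have := h2 hl; omega, FreeMonoid.toList_ofList _⟩

lemma f0_injOn : Set.InjOn f0 NM := by
  intro w1 hw1 w2 hw2 heq
  obtain ⟨s1, l1, t1, a1, b1, c1⟩ := (NM_iff w1).1 hw1
  obtain ⟨s2, l2, t2, a2, b2, c2⟩ := (NM_iff w2).1 hw2
  rw [f0_eq w1 s1 l1 t1 a1 b1 c1, f0_eq w2 s2 l2 t2 a2 b2 c2] at heq
  have h := congrArg FreeMonoid.toList heq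
  rw [FreeMonoid.toList_ofList, FreeMonoid.toList_ofList] at h
  obtain ⟨hs, hl, hq, hr⟩ := encG_inj hcd s1 s2 l1 l2 (t1 / 4) (t1 % 4) (t2 / 4) (t2 % 4)
    a1 a2 (fun hh => by have := b1 hh; omega) (fun hh => by have := b2 hh; omega) h
  have ht : t1 = t2 := by omega
  exact toList_injective (by rw [c1, c2, hs, hl, ht])

lemma f0_surjOn : Set.SurjOn f0 NM NN := by
  intro y hy
  obtain ⟨p, l, q, r, h1, hr, h2, h3⟩ := (NN_iff y).1 hy
  have hc : l = [] → 4 * q + r = 0 := fun hl => by rcases h2 hl with ⟨rfl, rfl⟩; rfl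
  refine ⟨FreeMonoid.ofList (encG AB.a AB.b p l 0 (4 * q + r)), ?_, ?_⟩
  · exact (NM_iff _).2 ⟨p, l, 4 * q + r, h1, hc, FreeMonoid.toList_ofList _⟩
  · rw [f0_eq _ p l (4 * q + r) h1 hc (FreeMonoid.toList_ofList _)]
    have e1 : (4 * q + r) / 4 = q := by omega
    have e2 : (4 * q + r) % 4 = r := by omega
    rw [e1, e2, ← h3, FreeMonoid.ofList_toList]

end Stmt13Aux

/-- The map `f` sending `b^s ↦ d^s`, `b^s u ↦ d^s ū`, and `b^s u b^t ↦ d^s ū (d³c)^q d^r`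
(where `t = 4q + r`, `0 ≤ r ≤ 3`) is a bijection from `N_M` onto `N_N`. -/
theorem stmt13 :
    ∃ f : WM → WN, Set.BijOn f NM NN ∧
      (∀ s : ℕ, f (b ^ s) = d ^ s) ∧
      (∀ s : ℕ, ∀ u ∈ UM, f (b ^ s * u) = d ^ s * bar u) ∧
      (∀ s t : ℕ, ∀ u ∈ UM, 0 < t →
        f (b ^ s * u * b ^ t) = d ^ s * bar u * (d ^ 3 * c) ^ (t / 4) * d ^ (t % 4)) :=
  ⟨Stmt13Aux.f0, ⟨Stmt13Aux.f0_mapsTo, Stmt13Aux.f0_injOn, Stmt13Aux.f0_surjOn⟩,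
    Stmt13Aux.f0_pow, fun s u hu => Stmt13Aux.f0_mid s u hu,
    fun s t u hu ht => Stmt13Aux.f0_top s t u hu ht⟩
end

section
/- Let M = ⟨a,b | ab^n a = aba (n ≥ 2)⟩ and N = ⟨c,d | cdc = cd²c = cd⁴ = cd³c² = cd³cdc⟩. There is a bijection f : M → N such that for all x, y ∈ M: there exists g ∈ {a,b} with y = x·g (in M) if and only if there exists h ∈ {c,d} with f(y) = f(x)·h (in N); that is, the unlabelled directed right Cayley graphs Cay(M,{a,b}) and Cay(N,{c,d}) are isomorphic. -/
open Relation

namespace S14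

abbrev Bl := ℕ × List ℕ
abbrev St := ℕ ⊕ (ℕ × Bl × ℕ)

def incLast : List ℕ → List ℕ
  | [] => []
  | [j] => [j+1]
  | j :: l :: ls => j :: incLast (l :: ls)

def incBl : Bl → Bl
  | (i, []) => (i+1, [])
  | (i, j :: l) => (i, incLast (j :: l))

def appBl : Bl → Bl := fun p => (p.1, p.2 ++ [0])

def actM : St → AB → St
  | .inl s, .b => .inl (s+1)
  | .inl s, .a => .inr (s, (0, []), 0)
  | .inr (s, bl, 0), .a => .inr (s, incBl bl, 0)
  | .inr (s, bl, 0), .b => .inr (s, bl, 1)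
  | .inr (s, bl, t+1), .b => .inr (s, bl, t+2)
  | .inr (s, bl, _+1), .a => .inr (s, appBl bl, 0)

def actN : St → CD → St
  | .inl p, .d => .inl (p+1)
  | .inl p, .c => .inr (p, (0, []), 0)
  | .inr (p, bl, 0), .c => .inr (p, incBl bl, 0)
  | .inr (p, bl, 0), .d => .inr (p, bl, 1)
  | .inr (p, bl, t+1), .d =>
      if (t+1) % 4 = 3 then .inr (p, appBl bl, 0) else .inr (p, bl, t+2)
  | .inr (p, bl, t+1), .c =>
      if (t+1) % 4 = 3 then .inr (p, bl, t+2) else .inr (p, appBl bl, 0)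

/-- The key graph-level fact: the two actions have identical edge sets. -/
theorem edge_sets (m z : St) :
    (z = actM m AB.a ∨ z = actM m AB.b) ↔ (z = actN m CD.c ∨ z = actN m CD.d) := by
  rcases m with s | ⟨s, bl, t⟩
  · simp [actM, actN]
  · rcases t with _ | t
    · simp [actM, actN]
    · by_cases h : (t+1) % 4 = 3 <;> simp [actM, actN, h, or_comm]

def actWM (x : St) (w : WM) : St := (FreeMonoid.toList w).foldl actM x
def actWN (x : St) (w : WN) : St := (FreeMonoid.toList w).foldl actN x

theorem actWM_mul (x : St) (w₁ w₂ : WM) : actWM x (w₁ * w₂) = actWM (actWM x w₁) w₂ := by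
  simp [actWM, FreeMonoid.toList_mul, List.foldl_append]

theorem actWN_mul (x : St) (w₁ w₂ : WN) : actWN x (w₁ * w₂) = actWN (actWN x w₁) w₂ := by
  simp [actWN, FreeMonoid.toList_mul, List.foldl_append]

theorem actWM_of (x : St) (g : AB) : actWM x (FreeMonoid.of g) = actM x g := rfl
theorem actWN_of (x : St) (g : CD) : actWN x (FreeMonoid.of g) = actN x g := rfl

theorem actWM_a (x : St) : actWM x a = actM x AB.a := rfl
theorem actWM_b (x : St) : actWM x b = actM x AB.b := rfl
theorem actWN_c (x : St) : actWN x c = actN x CD.c := rfl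
theorem actWN_d (x : St) : actWN x d = actN x CD.d := rfl

theorem actWM_one (x : St) : actWM x 1 = x := rfl
theorem actWN_one (x : St) : actWN x 1 = x := rfl

-- step lemmas for actN on tails
theorem actN_d_step (p : ℕ) (bl : Bl) (t : ℕ) (h : t % 4 ≠ 3) :
    actN (.inr (p, bl, t)) CD.d = .inr (p, bl, t+1) := by
  cases t with
  | zero => rfl
  | succ t => simp [actN, h]

theorem actN_d_exit (p : ℕ) (bl : Bl) (t : ℕ) (h : t % 4 = 3) :
    actN (.inr (p, bl, t)) CD.d = .inr (p, appBl bl, 0) := by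
  cases t with
  | zero => omega
  | succ t => simp [actN, h]

theorem actN_c_step (p : ℕ) (bl : Bl) (t : ℕ) (h : t % 4 = 3) :
    actN (.inr (p, bl, t)) CD.c = .inr (p, bl, t+1) := by
  cases t with
  | zero => omega
  | succ t => simp [actN, h]

theorem actN_c_exit (p : ℕ) (bl : Bl) (t : ℕ) (h1 : t ≠ 0) (h : t % 4 ≠ 3) :
    actN (.inr (p, bl, t)) CD.c = .inr (p, appBl bl, 0) := by
  cases t with
  | zero => omega
  | succ t => simp [actN, h]

-- powers of b / d
theorem actWM_bpow_inl (s n : ℕ) : actWM (.inl s) (b ^ n) = .inl (s + n) := by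
  induction n with
  | zero => simp [actWM_one]
  | succ n ih => rw [pow_succ, actWM_mul, ih, actWM_b]; rfl

theorem actWM_bpow_inr (s : ℕ) (bl : Bl) (t : ℕ) :
    actWM (.inr (s, bl, 0)) (b ^ t) = .inr (s, bl, t) := by
  induction t with
  | zero => simp [actWM_one]
  | succ t ih =>
    rw [pow_succ, actWM_mul, ih, actWM_b]
    cases t <;> rfl

theorem actWN_dpow_inl (p n : ℕ) : actWN (.inl p) (d ^ n) = .inl (p + n) := by
  induction n with
  | zero => simp [actWN_one]
  | succ n ih => rw [pow_succ, actWN_mul, ih, actWN_d]; rfl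

-- acting by powers of a / c on a base state
theorem actWM_apow_nil (s i k : ℕ) :
    actWM (.inr (s, (i, []), 0)) (a ^ k) = .inr (s, (i + k, []), 0) := by
  induction k with
  | zero => simp [actWM_one]
  | succ k ih => rw [pow_succ, actWM_mul, ih, actWM_a]; rfl

theorem incLast_append (l : List ℕ) (j : ℕ) : incLast (l ++ [j]) = l ++ [j+1] := by
  induction l with
  | nil => rfl
  | cons x l ih =>
    cases l with
    | nil => rfl
    | cons y l' =>
      show x :: incLast ((y :: l') ++ [j]) = x :: ((y :: l') ++ [j+1])
      rw [ih]

theorem incBl_append (i : ℕ) (l : List ℕ) (j : ℕ) :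
    incBl (i, l ++ [j]) = (i, l ++ [j+1]) := by
  cases l with
  | nil => rfl
  | cons x l =>
    show (i, incLast ((x :: l) ++ [j])) = (i, (x :: l) ++ [j+1])
    rw [incLast_append]

theorem actWM_apow_app (s i : ℕ) (l : List ℕ) (j k : ℕ) :
    actWM (.inr (s, (i, l ++ [j]), 0)) (a ^ k) = .inr (s, (i, l ++ [j + k]), 0) := by
  induction k with
  | zero => simp [actWM_one]
  | succ k ih =>
    rw [pow_succ, actWM_mul, ih, actWM_a]
    show Sum.inr (s, incBl (i, l ++ [j+k]), 0) = _
    rw [incBl_append]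
    have h2 : j + k + 1 = j + (k + 1) := by omega
    rw [h2]

theorem actWN_cpow_nil (p i k : ℕ) :
    actWN (.inr (p, (i, []), 0)) (c ^ k) = .inr (p, (i + k, []), 0) := by
  induction k with
  | zero => simp [actWN_one]
  | succ k ih => rw [pow_succ, actWN_mul, ih, actWN_c]; rfl

theorem actWN_cpow_app (p i : ℕ) (l : List ℕ) (j k : ℕ) :
    actWN (.inr (p, (i, l ++ [j]), 0)) (c ^ k) = .inr (p, (i, l ++ [j + k]), 0) := by
  induction k with
  | zero => simp [actWN_one]
  | succ k ih =>
    rw [pow_succ, actWN_mul, ih, actWN_c]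
    show Sum.inr (p, incBl (i, l ++ [j+k]), 0) = _
    rw [incBl_append]
    have h2 : j + k + 1 = j + (k + 1) := by omega
    rw [h2]

-- block words
def blkM : ℕ → List ℕ → WM
  | i, [] => a ^ (i+1)
  | i, j :: l => a ^ (i+1) * b * blkM j l

def blkN : ℕ → List ℕ → WN
  | i, [] => c ^ (i+1)
  | i, j :: l => c ^ (i+1) * d * blkN j l

def twN (t : ℕ) : WN := (d ^ 3 * c) ^ (t / 4) * d ^ (t % 4)

theorem twN_zero : twN 0 = 1 := by simp [twN]

theorem twN_succ_d (t : ℕ) (h : t % 4 ≠ 3) : twN (t+1) = twN t * d := by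
  have h1 : (t+1) / 4 = t / 4 := by omega
  have h2 : (t+1) % 4 = t % 4 + 1 := by omega
  rw [twN, twN, h1, h2, pow_succ d (t % 4), ← mul_assoc]

theorem twN_succ_c (t : ℕ) (h : t % 4 = 3) : twN (t+1) = twN t * c := by
  have h1 : (t+1) / 4 = t / 4 + 1 := by omega
  have h2 : (t+1) % 4 = 0 := by omega
  rw [twN, twN, h1, h2, h, pow_succ (d ^ 3 * c) (t / 4), pow_zero, mul_one, ← mul_assoc]

def toWM : St → WM
  | .inl s => b ^ s
  | .inr (s, bl, t) => b ^ s * blkM bl.1 bl.2 * b ^ t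

def toWN : St → WN
  | .inl p => d ^ p
  | .inr (p, bl, t) => d ^ p * blkN bl.1 bl.2 * twN t

theorem actWM_blk_tail1 (s i0 : ℕ) (l : List ℕ) (j : ℕ) (m : List ℕ) :
    actWM (.inr (s, (i0, m), 1)) (blkM j l) = .inr (s, (i0, m ++ j :: l), 0) := by
  induction l generalizing j m with
  | nil =>
    rw [blkM, pow_succ', actWM_mul, actWM_a]
    show actWM (.inr (s, (i0, m ++ [0]), 0)) (a ^ j) = _
    rw [actWM_apow_app]
    rw [Nat.zero_add]
  | cons j' l ih =>
    rw [blkM, actWM_mul, actWM_mul, pow_succ', actWM_mul, actWM_a]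
    show actWM (actWM (.inr (s, (i0, m ++ [0]), 0)) (a ^ j)) (b * blkM j' l) = _
    rw [actWM_apow_app, Nat.zero_add, actWM_mul, actWM_b]
    show actWM (.inr (s, (i0, m ++ [j]), 1)) (blkM j' l) = _
    rw [ih]
    simp

theorem actWM_blk_inl (s i : ℕ) (l : List ℕ) :
    actWM (.inl s) (blkM i l) = .inr (s, (i, l), 0) := by
  cases l with
  | nil =>
    rw [blkM, pow_succ', actWM_mul, actWM_a]
    show actWM (.inr (s, (0, []), 0)) (a ^ i) = _
    rw [actWM_apow_nil, Nat.zero_add]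
  | cons j l =>
    rw [blkM, pow_succ', actWM_mul, actWM_mul, actWM_mul, actWM_a]
    show actWM (actWM (actWM (.inr (s, (0, []), 0)) (a ^ i)) b) (blkM j l) = _
    rw [actWM_apow_nil, Nat.zero_add, actWM_b]
    show actWM (.inr (s, (i, []), 1)) (blkM j l) = _
    rw [actWM_blk_tail1]
    simp

theorem actWN_blk_tail1 (p i0 : ℕ) (l : List ℕ) (j : ℕ) (m : List ℕ) :
    actWN (.inr (p, (i0, m), 1)) (blkN j l) = .inr (p, (i0, m ++ j :: l), 0) := by
  induction l generalizing j m with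
  | nil =>
    rw [blkN, pow_succ', actWN_mul, actWN_c]
    show actWN (.inr (p, (i0, m ++ [0]), 0)) (c ^ j) = _
    rw [actWN_cpow_app]
    rw [Nat.zero_add]
  | cons j' l ih =>
    rw [blkN, actWN_mul, actWN_mul, pow_succ', actWN_mul, actWN_c]
    show actWN (actWN (.inr (p, (i0, m ++ [0]), 0)) (c ^ j)) (d * blkN j' l) = _
    rw [actWN_cpow_app, Nat.zero_add, actWN_mul, actWN_d]
    show actWN (.inr (p, (i0, m ++ [j]), 1)) (blkN j' l) = _
    rw [ih]
    simp

theorem actWN_blk_inl (p i : ℕ) (l : List ℕ) :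
    actWN (.inl p) (blkN i l) = .inr (p, (i, l), 0) := by
  cases l with
  | nil =>
    rw [blkN, pow_succ', actWN_mul, actWN_c]
    show actWN (.inr (p, (0, []), 0)) (c ^ i) = _
    rw [actWN_cpow_nil, Nat.zero_add]
  | cons j l =>
    rw [blkN, pow_succ', actWN_mul, actWN_mul, actWN_mul, actWN_c]
    show actWN (actWN (actWN (.inr (p, (0, []), 0)) (c ^ i)) d) (blkN j l) = _
    rw [actWN_cpow_nil, Nat.zero_add, actWN_d]
    show actWN (.inr (p, (i, []), 1)) (blkN j l) = _
    rw [actWN_blk_tail1]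
    simp

theorem actWN_twN (p : ℕ) (bl : Bl) (t : ℕ) :
    actWN (.inr (p, bl, 0)) (twN t) = .inr (p, bl, t) := by
  induction t with
  | zero => rw [twN_zero, actWN_one]
  | succ t ih =>
    by_cases h : t % 4 = 3
    · rw [twN_succ_c t h, actWN_mul, ih, actWN_c, actN_c_step p bl t h]
    · rw [twN_succ_d t h, actWN_mul, ih, actWN_d, actN_d_step p bl t h]

theorem evalM_toWM (m : St) : actWM (.inl 0) (toWM m) = m := by
  rcases m with s | ⟨s, ⟨i, l⟩, t⟩
  · show actWM (.inl 0) (b ^ s) = _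
    rw [actWM_bpow_inl, Nat.zero_add]
  · show actWM (.inl 0) (b ^ s * blkM i l * b ^ t) = _
    rw [actWM_mul, actWM_mul, actWM_bpow_inl, Nat.zero_add, actWM_blk_inl, actWM_bpow_inr]

theorem evalN_toWN (m : St) : actWN (.inl 0) (toWN m) = m := by
  rcases m with p | ⟨p, ⟨i, l⟩, t⟩
  · show actWN (.inl 0) (d ^ p) = _
    rw [actWN_dpow_inl, Nat.zero_add]
  · show actWN (.inl 0) (d ^ p * blkN i l * twN t) = _
    rw [actWN_mul, actWN_mul, actWN_dpow_inl, Nat.zero_add, actWN_blk_inl, actWN_twN]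

-- free monoid identities for block words
theorem blkM_incLast (l : List ℕ) : ∀ (i j : ℕ), blkM i (incLast (j :: l)) = blkM i (j :: l) * a := by
  induction l with
  | nil =>
    intro i j
    show blkM i [j+1] = blkM i [j] * a
    show _root_.a ^ (i+1) * b * blkM (j+1) [] = _root_.a ^ (i+1) * b * blkM j [] * a
    show _root_.a ^ (i+1) * b * _root_.a ^ (j+2) = _root_.a ^ (i+1) * b * _root_.a ^ (j+1) * a
    rw [pow_succ (_root_.a) (j+1), ← mul_assoc]
  | cons j' l ih =>
    intro i j
    show _root_.a ^ (i+1) * b * blkM j (incLast (j' :: l)) = _root_.a ^ (i+1) * b * blkM j (j' :: l) * a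
    rw [ih j j', ← mul_assoc]

theorem blkM_inc (i : ℕ) (l : List ℕ) :
    blkM (incBl (i, l)).1 (incBl (i, l)).2 = blkM i l * a := by
  cases l with
  | nil =>
    show _root_.a ^ (i+2) = _root_.a ^ (i+1) * a
    rw [pow_succ]
  | cons j l =>
    show blkM i (incLast (j :: l)) = blkM i (j :: l) * a
    exact blkM_incLast l i j

theorem blkM_app (l : List ℕ) : ∀ i : ℕ, blkM i (l ++ [0]) = blkM i l * b * a := by
  induction l with
  | nil =>
    intro i
    show _root_.a ^ (i+1) * b * blkM 0 [] = _root_.a ^ (i+1) * b * a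
    show _root_.a ^ (i+1) * b * _root_.a ^ 1 = _root_.a ^ (i+1) * b * a
    rw [pow_one]
  | cons j l ih =>
    intro i
    show _root_.a ^ (i+1) * b * blkM j (l ++ [0]) = _root_.a ^ (i+1) * b * blkM j l * b * a
    rw [ih j, ← mul_assoc, ← mul_assoc]

theorem blkM_ends (l : List ℕ) : ∀ i : ℕ, ∃ w, blkM i l = w * a := by
  induction l with
  | nil => intro i; exact ⟨_root_.a ^ i, pow_succ _root_.a i⟩
  | cons j l ih =>
    intro i
    obtain ⟨w, hw⟩ := ih j
    exact ⟨_root_.a ^ (i+1) * b * w, by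
      show _root_.a ^ (i+1) * b * blkM j l = _
      rw [hw, ← mul_assoc]⟩

theorem blkN_incLast (l : List ℕ) : ∀ (i j : ℕ), blkN i (incLast (j :: l)) = blkN i (j :: l) * c := by
  induction l with
  | nil =>
    intro i j
    show _root_.c ^ (i+1) * d * _root_.c ^ (j+2) = _root_.c ^ (i+1) * d * _root_.c ^ (j+1) * c
    rw [pow_succ (_root_.c) (j+1), ← mul_assoc]
  | cons j' l ih =>
    intro i j
    show _root_.c ^ (i+1) * d * blkN j (incLast (j' :: l)) = _root_.c ^ (i+1) * d * blkN j (j' :: l) * c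
    rw [ih j j', ← mul_assoc]

theorem blkN_inc (i : ℕ) (l : List ℕ) :
    blkN (incBl (i, l)).1 (incBl (i, l)).2 = blkN i l * c := by
  cases l with
  | nil =>
    show _root_.c ^ (i+2) = _root_.c ^ (i+1) * c
    rw [pow_succ]
  | cons j l =>
    show blkN i (incLast (j :: l)) = blkN i (j :: l) * c
    exact blkN_incLast l i j

theorem blkN_app (l : List ℕ) : ∀ i : ℕ, blkN i (l ++ [0]) = blkN i l * d * c := by
  induction l with
  | nil =>
    intro i
    show _root_.c ^ (i+1) * d * _root_.c ^ 1 = _root_.c ^ (i+1) * d * c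
    rw [pow_one]
  | cons j l ih =>
    intro i
    show _root_.c ^ (i+1) * d * blkN j (l ++ [0]) = _root_.c ^ (i+1) * d * blkN j l * d * c
    rw [ih j, ← mul_assoc, ← mul_assoc]

theorem blkN_ends (l : List ℕ) : ∀ i : ℕ, ∃ w, blkN i l = w * c := by
  induction l with
  | nil => intro i; exact ⟨_root_.c ^ i, pow_succ _root_.c i⟩
  | cons j l ih =>
    intro i
    obtain ⟨w, hw⟩ := ih j
    exact ⟨_root_.c ^ (i+1) * d * w, by
      show _root_.c ^ (i+1) * d * blkN j l = _
      rw [hw, ← mul_assoc]⟩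

-- quotient layer
abbrev QM := (conGen rM).Quotient
abbrev QN := (conGen rN).Quotient
def mkM : WM → QM := fun w => ↑w
def mkN : WN → QN := fun w => ↑w

theorem mkM_mul (x y : WM) : mkM (x * y) = mkM x * mkM y := rfl
theorem mkN_mul (x y : WN) : mkN (x * y) = mkN x * mkN y := rfl

theorem mkM_rel {u v : WM} (h : rM u v) (x : WM) : mkM (x * u) = mkM (x * v) :=
  ((conGen rM).eq).mpr (ConGen.Rel.mul (ConGen.Rel.refl x) (ConGen.Rel.of _ _ h))

theorem mkN_rel {u v : WN} (h : rN u v) (x : WN) : mkN (x * u) = mkN (x * v) :=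
  ((conGen rN).eq).mpr (ConGen.Rel.mul (ConGen.Rel.refl x) (ConGen.Rel.of _ _ h))

-- M tail collapse
theorem mkM_exit (w : WM) (hw : ∃ w', w = w' * a) (t : ℕ) (ht : 1 ≤ t) :
    mkM (w * b ^ t * a) = mkM (w * b * a) := by
  rcases Nat.lt_or_ge t 2 with h2 | h2
  · have : t = 1 := by omega
    subst this
    rw [pow_one]
  · obtain ⟨w', rfl⟩ := hw
    have e1 : w' * a * b ^ t * a = w' * (a * b ^ t * a) := by simp [mul_assoc]
    have e2 : w' * a * b * a = w' * (a * b * a) := by simp [mul_assoc]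
    rw [e1, e2]
    exact mkM_rel ⟨t, h2, rfl, rfl⟩ w'

-- N helpers
theorem endc_pow {w : WN} (hw : ∃ w', w = w' * c) (q : ℕ) :
    ∃ z, w * (d ^ 3 * c) ^ q = z * c := by
  cases q with
  | zero =>
    obtain ⟨w', rfl⟩ := hw
    exact ⟨w', by rw [pow_zero, mul_one]⟩
  | succ q =>
    exact ⟨w * (d ^ 3 * c) ^ q * d ^ 3, by rw [pow_succ, ← mul_assoc, mul_assoc _ (d ^ 3) c]⟩

theorem mkN_L (w : WN) (hw : ∃ w', w = w' * c) (q : ℕ) :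
    mkN (w * (d ^ 3 * c) ^ q * (d * c)) = mkN (w * (d * c)) := by
  induction q with
  | zero => rw [pow_zero, mul_one]
  | succ q ih =>
    obtain ⟨z, hz⟩ := endc_pow hw q
    have e : w * (d ^ 3 * c) ^ (q+1) * (d * c) = z * (c * d ^ 3 * (c * d * c)) := by
      have h1 : w * (d ^ 3 * c) ^ (q+1) * (d * c)
          = w * (d ^ 3 * c) ^ q * (d ^ 3 * c * (d * c)) := by
        rw [pow_succ]; simp only [mul_assoc]
      rw [h1, hz]; simp only [mul_assoc]
    have e2 : z * (c * d * c) = w * (d ^ 3 * c) ^ q * (d * c) := by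
      rw [hz]; simp only [mul_assoc]
    rw [e, mkN_rel ⟨Or.inr (Or.inr (Or.inr rfl)), rfl⟩ z, e2, ih]

theorem mkN_exit_d (w : WN) (hw : ∃ w', w = w' * c) (q : ℕ) :
    mkN (w * ((d ^ 3 * c) ^ q * d ^ 3) * d) = mkN (w * (d * c)) := by
  obtain ⟨z, hz⟩ := endc_pow hw q
  have e : w * ((d ^ 3 * c) ^ q * d ^ 3) * d = z * (c * d ^ 4) := by
    have h1 : w * ((d ^ 3 * c) ^ q * d ^ 3) * d = w * (d ^ 3 * c) ^ q * (d ^ 3 * d) := by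
      simp only [mul_assoc]
    rw [h1, hz, show (d : WN) ^ 3 * d = d ^ 4 from (pow_succ d 3).symm]
    simp only [mul_assoc]
  have e2 : z * (c * d * c) = w * (d ^ 3 * c) ^ q * (d * c) := by
    rw [hz]; simp only [mul_assoc]
  rw [e, mkN_rel ⟨Or.inr (Or.inl rfl), rfl⟩ z, e2, mkN_L w hw q]

theorem mkN_exit_c (w : WN) (hw : ∃ w', w = w' * c) (t : ℕ) (h1 : 1 ≤ t) (h3 : t % 4 ≠ 3) :
    mkN (w * ((d ^ 3 * c) ^ (t / 4) * d ^ (t % 4)) * c) = mkN (w * (d * c)) := by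
  have hr : t % 4 = 0 ∨ t % 4 = 1 ∨ t % 4 = 2 := by omega
  rcases hr with hr | hr | hr
  · -- r = 0, q ≥ 1
    obtain ⟨q', hq'⟩ : ∃ q', t / 4 = q' + 1 := ⟨t / 4 - 1, by omega⟩
    obtain ⟨z, hz⟩ := endc_pow hw q'
    have e : w * ((d ^ 3 * c) ^ (t / 4) * d ^ (t % 4)) * c = z * (c * d ^ 3 * c ^ 2) := by
      rw [hr, hq', pow_zero, mul_one, pow_succ]
      have h1 : w * ((d ^ 3 * c) ^ q' * (d ^ 3 * c)) * c
          = w * (d ^ 3 * c) ^ q' * (d ^ 3 * (c * c)) := by simp only [mul_assoc]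
      rw [h1, hz, show (c : WN) * c = c ^ 2 from (pow_two c).symm]
      simp only [mul_assoc]
    have e2 : z * (c * d * c) = w * (d ^ 3 * c) ^ q' * (d * c) := by
      rw [hz]; simp only [mul_assoc]
    rw [e, mkN_rel ⟨Or.inr (Or.inr (Or.inl rfl)), rfl⟩ z, e2, mkN_L w hw q']
  · -- r = 1
    have e : w * ((d ^ 3 * c) ^ (t / 4) * d ^ (t % 4)) * c
        = w * (d ^ 3 * c) ^ (t / 4) * (d * c) := by
      rw [hr, pow_one]
      simp only [mul_assoc]
    rw [e, mkN_L w hw (t / 4)]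
  · -- r = 2
    obtain ⟨z, hz⟩ := endc_pow hw (t / 4)
    have e : w * ((d ^ 3 * c) ^ (t / 4) * d ^ (t % 4)) * c = z * (c * d ^ 2 * c) := by
      rw [hr]
      have h1 : w * ((d ^ 3 * c) ^ (t / 4) * d ^ 2) * c
          = w * (d ^ 3 * c) ^ (t / 4) * (d ^ 2 * c) := by simp only [mul_assoc]
      rw [h1, hz]
      simp only [mul_assoc]
    have e2 : z * (c * d * c) = w * (d ^ 3 * c) ^ (t / 4) * (d * c) := by
      rw [hz]; simp only [mul_assoc]
    rw [e, mkN_rel ⟨Or.inl rfl, rfl⟩ z, e2, mkN_L w hw (t / 4)]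

theorem twN_one : twN 1 = d := by
  rw [show (1:ℕ) = 0 + 1 from rfl, twN_succ_d 0 (by omega), twN_zero, one_mul]

theorem keyM (m : St) (g : AB) : mkM (toWM (actM m g)) = mkM (toWM m * FreeMonoid.of g) := by
  rcases m with s | ⟨s, ⟨i, l⟩, t⟩
  · cases g with
    | a =>
      refine congrArg mkM ?_
      show b ^ s * blkM 0 [] * b ^ 0 = b ^ s * a
      show b ^ s * _root_.a ^ (0 + 1) * b ^ 0 = b ^ s * a
      rw [pow_one, pow_zero, mul_one]
    | b =>
      refine congrArg mkM ?_
      show b ^ (s + 1) = b ^ s * b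
      rw [pow_succ]
  · cases t with
    | zero =>
      cases g with
      | a =>
        refine congrArg mkM ?_
        show b ^ s * blkM (incBl (i, l)).1 (incBl (i, l)).2 * b ^ 0
            = b ^ s * blkM i l * b ^ 0 * a
        rw [blkM_inc, pow_zero, mul_one, mul_one, ← mul_assoc]
      | b =>
        refine congrArg mkM ?_
        show b ^ s * blkM i l * b ^ 1 = b ^ s * blkM i l * b ^ 0 * b
        rw [pow_one, pow_zero, mul_one]
    | succ t =>
      cases g with
      | b =>
        refine congrArg mkM ?_
        show b ^ s * blkM i l * b ^ (t + 2) = b ^ s * blkM i l * b ^ (t + 1) * b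
        rw [pow_succ b (t + 1), ← mul_assoc]
      | a =>
        show mkM (b ^ s * blkM (appBl (i, l)).1 (appBl (i, l)).2 * b ^ 0)
            = mkM (b ^ s * blkM i l * b ^ (t + 1) * a)
        obtain ⟨w0, hw0⟩ := blkM_ends l i
        have hw : ∃ w', b ^ s * blkM i l = w' * a := ⟨b ^ s * w0, by rw [hw0, ← mul_assoc]⟩
        have h1 : b ^ s * blkM (appBl (i, l)).1 (appBl (i, l)).2 * b ^ 0
            = b ^ s * blkM i l * b * a := by
          show b ^ s * blkM i (l ++ [0]) * b ^ 0 = _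
          rw [blkM_app, pow_zero, mul_one]
          simp only [mul_assoc]
        rw [h1]
        exact (mkM_exit (b ^ s * blkM i l) hw (t + 1) (by omega)).symm

theorem keyN (m : St) (g : CD) : mkN (toWN (actN m g)) = mkN (toWN m * FreeMonoid.of g) := by
  rcases m with p | ⟨p, ⟨i, l⟩, t⟩
  · cases g with
    | c =>
      refine congrArg mkN ?_
      show d ^ p * blkN 0 [] * twN 0 = d ^ p * c
      show d ^ p * _root_.c ^ (0 + 1) * twN 0 = d ^ p * c
      rw [pow_one, twN_zero, mul_one]
    | d =>
      refine congrArg mkN ?_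
      show d ^ (p + 1) = d ^ p * d
      rw [pow_succ]
  · cases t with
    | zero =>
      cases g with
      | c =>
        refine congrArg mkN ?_
        show d ^ p * blkN (incBl (i, l)).1 (incBl (i, l)).2 * twN 0
            = d ^ p * blkN i l * twN 0 * c
        rw [blkN_inc, twN_zero, mul_one, mul_one, ← mul_assoc]
      | d =>
        refine congrArg mkN ?_
        show d ^ p * blkN i l * twN 1 = d ^ p * blkN i l * twN 0 * d
        rw [twN_one, twN_zero, mul_one]
    | succ t =>
      obtain ⟨w0, hw0⟩ := blkN_ends l i
      have hw : ∃ w', d ^ p * blkN i l = w' * c := ⟨d ^ p * w0, by rw [hw0, ← mul_assoc]⟩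
      cases g with
      | d =>
        by_cases h : (t + 1) % 4 = 3
        · rw [actN_d_exit p (i, l) (t + 1) h]
          show mkN (d ^ p * blkN (appBl (i, l)).1 (appBl (i, l)).2 * twN 0)
              = mkN (d ^ p * blkN i l * twN (t + 1) * d)
          have h1 : d ^ p * blkN (appBl (i, l)).1 (appBl (i, l)).2 * twN 0
              = d ^ p * blkN i l * (d * c) := by
            show d ^ p * blkN i (l ++ [0]) * twN 0 = _
            rw [blkN_app, twN_zero, mul_one]
            simp only [mul_assoc]
          have h2 : d ^ p * blkN i l * twN (t + 1) * d
              = d ^ p * blkN i l * ((d ^ 3 * c) ^ ((t + 1) / 4) * d ^ 3) * d := by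
            rw [twN, h]
          rw [h1, h2]
          exact (mkN_exit_d (d ^ p * blkN i l) hw ((t + 1) / 4)).symm
        · rw [actN_d_step p (i, l) (t + 1) h]
          refine congrArg mkN ?_
          show d ^ p * blkN i l * twN (t + 2) = d ^ p * blkN i l * twN (t + 1) * d
          rw [twN_succ_d (t + 1) h, ← mul_assoc]
      | c =>
        by_cases h : (t + 1) % 4 = 3
        · rw [actN_c_step p (i, l) (t + 1) h]
          refine congrArg mkN ?_
          show d ^ p * blkN i l * twN (t + 2) = d ^ p * blkN i l * twN (t + 1) * c
          rw [twN_succ_c (t + 1) h, ← mul_assoc]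
        · rw [actN_c_exit p (i, l) (t + 1) (by omega) h]
          show mkN (d ^ p * blkN (appBl (i, l)).1 (appBl (i, l)).2 * twN 0)
              = mkN (d ^ p * blkN i l * twN (t + 1) * c)
          have h1 : d ^ p * blkN (appBl (i, l)).1 (appBl (i, l)).2 * twN 0
              = d ^ p * blkN i l * (d * c) := by
            show d ^ p * blkN i (l ++ [0]) * twN 0 = _
            rw [blkN_app, twN_zero, mul_one]
            simp only [mul_assoc]
          have h2 : d ^ p * blkN i l * twN (t + 1) * c
              = d ^ p * blkN i l * ((d ^ 3 * c) ^ ((t + 1) / 4) * d ^ ((t + 1) % 4)) * c := by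
            rw [twN]
          rw [h1, h2]
          exact (mkN_exit_c (d ^ p * blkN i l) hw (t + 1) (by omega) h).symm

-- soundness of the actions w.r.t. the congruences
theorem actM_a_shape (x : St) : ∃ s bl, actM x AB.a = .inr (s, bl, 0) := by
  rcases x with s | ⟨s, bl, t⟩
  · exact ⟨s, (0, []), rfl⟩
  · cases t with
    | zero => exact ⟨s, incBl bl, rfl⟩
    | succ t => exact ⟨s, appBl bl, rfl⟩

theorem actM_a_tail (s : ℕ) (bl : Bl) (n : ℕ) (h : 1 ≤ n) :
    actM (.inr (s, bl, n)) AB.a = .inr (s, appBl bl, 0) := by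
  cases n with
  | zero => omega
  | succ n => rfl

theorem soundM {w z : WM} (h : ConGen.Rel rM w z) : ∀ x, actWM x w = actWM x z := by
  induction h with
  | of u v huv =>
    obtain ⟨n, hn, rfl, rfl⟩ := huv
    intro x
    obtain ⟨s, bl, hsb⟩ := actM_a_shape x
    simp only [actWM_mul, actWM_a, actWM_b, hsb, actWM_bpow_inr]
    rw [actM_a_tail s bl n (by omega)]
    rfl
  | refl w => intro x; rfl
  | symm _ ih => intro x; exact (ih x).symm
  | trans _ _ ih1 ih2 => intro x; exact (ih1 x).trans (ih2 x)
  | mul _ _ ih1 ih2 =>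
    intro x
    rw [actWM_mul, actWM_mul, ih1, ih2]

theorem actN_c_shape (x : St) : ∃ p bl t, actN x CD.c = .inr (p, bl, t) ∧ t % 4 = 0 := by
  rcases x with p | ⟨p, bl, t⟩
  · exact ⟨p, (0, []), 0, rfl, rfl⟩
  · cases t with
    | zero => exact ⟨p, incBl bl, 0, rfl, rfl⟩
    | succ t =>
      by_cases h : (t + 1) % 4 = 3
      · exact ⟨p, bl, t + 2, by simp [actN, h], by omega⟩
      · exact ⟨p, appBl bl, 0, by simp [actN, h], rfl⟩

theorem soundN {w z : WN} (h : ConGen.Rel rN w z) : ∀ x, actWN x w = actWN x z := by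
  induction h with
  | of u v huv =>
    obtain ⟨h4, rfl⟩ := huv
    intro x
    obtain ⟨p, bl, t, hc, ht⟩ := actN_c_shape x
    have s1 : actN (.inr (p, bl, t)) CD.d = .inr (p, bl, t + 1) :=
      actN_d_step _ _ _ (by omega)
    have s2 : actN (.inr (p, bl, t + 1)) CD.d = .inr (p, bl, t + 2) :=
      actN_d_step _ _ _ (by omega)
    have s3 : actN (.inr (p, bl, t + 2)) CD.d = .inr (p, bl, t + 3) :=
      actN_d_step _ _ _ (by omega)
    have s4 : actN (.inr (p, bl, t + 3)) CD.d = .inr (p, appBl bl, 0) :=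
      actN_d_exit _ _ _ (by omega)
    have c1 : actN (.inr (p, bl, t + 1)) CD.c = .inr (p, appBl bl, 0) :=
      actN_c_exit _ _ _ (by omega) (by omega)
    have c2 : actN (.inr (p, bl, t + 2)) CD.c = .inr (p, appBl bl, 0) :=
      actN_c_exit _ _ _ (by omega) (by omega)
    have c3 : actN (.inr (p, bl, t + 3)) CD.c = .inr (p, bl, t + 4) :=
      actN_c_step _ _ _ (by omega)
    have c4 : actN (.inr (p, bl, t + 4)) CD.c = .inr (p, appBl bl, 0) :=
      actN_c_exit _ _ _ (by omega) (by omega)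
    have d4 : actN (.inr (p, bl, t + 4)) CD.d = .inr (p, bl, t + 5) :=
      actN_d_step _ _ _ (by omega)
    have c5 : actN (.inr (p, bl, t + 5)) CD.c = .inr (p, appBl bl, 0) :=
      actN_c_exit _ _ _ (by omega) (by omega)
    rcases h4 with h | h | h | h <;> subst h
    · have e : (c * d ^ 2 * c : WN) = c * d * d * c := by
        rw [pow_two]; simp only [mul_assoc]
      rw [e]
      simp only [actWN_mul, actWN_c, actWN_d, hc, s1, s2, s3, s4, c1, c2, c3, c4, d4, c5]
    · have e : (c * d ^ 4 : WN) = c * d * d * d * d := by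
        rw [show (4 : ℕ) = 3 + 1 from rfl, pow_succ, show (3 : ℕ) = 2 + 1 from rfl, pow_succ,
          pow_two]
        simp only [mul_assoc]
      rw [e]
      simp only [actWN_mul, actWN_c, actWN_d, hc, s1, s2, s3, s4, c1, c2, c3, c4, d4, c5]
    · have e : (c * d ^ 3 * c ^ 2 : WN) = c * d * d * d * c * c := by
        rw [show (3 : ℕ) = 2 + 1 from rfl, pow_succ, pow_two, pow_two]
        simp only [mul_assoc]
      rw [e]
      simp only [actWN_mul, actWN_c, actWN_d, hc, s1, s2, s3, s4, c1, c2, c3, c4, d4, c5]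
    · have e : (c * d ^ 3 * (c * d * c) : WN) = c * d * d * d * c * d * c := by
        rw [show (3 : ℕ) = 2 + 1 from rfl, pow_succ, pow_two]
        simp only [mul_assoc]
      rw [e]
      simp only [actWN_mul, actWN_c, actWN_d, hc, s1, s2, s3, s4, c1, c2, c3, c4, d4, c5]
  | refl w => intro x; rfl
  | symm _ ih => intro x; exact (ih x).symm
  | trans _ _ ih1 ih2 => intro x; exact (ih1 x).trans (ih2 x)
  | mul _ _ ih1 ih2 =>
    intro x
    rw [actWN_mul, actWN_mul, ih1, ih2]

-- the quotient equivalences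
theorem foldM (x : St) : ∀ l : List AB,
    mkM (toWM (l.foldl actM x)) = mkM (toWM x) * mkM (FreeMonoid.ofList l) := by
  intro l
  induction l generalizing x with
  | nil =>
    show mkM (toWM x) = mkM (toWM x) * mkM 1
    rw [show (mkM 1 : QM) = 1 from rfl, mul_one]
  | cons g l ih =>
    calc mkM (toWM ((g :: l).foldl actM x)) = mkM (toWM (l.foldl actM (actM x g))) := rfl
    _ = mkM (toWM (actM x g)) * mkM (FreeMonoid.ofList l) := ih _
    _ = mkM (toWM x * FreeMonoid.of g) * mkM (FreeMonoid.ofList l) := by rw [keyM]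
    _ = mkM (toWM x) * (mkM (FreeMonoid.of g) * mkM (FreeMonoid.ofList l)) := by
        rw [mkM_mul, mul_assoc]
    _ = mkM (toWM x) * mkM (FreeMonoid.ofList (g :: l)) := rfl

theorem foldN (x : St) : ∀ l : List CD,
    mkN (toWN (l.foldl actN x)) = mkN (toWN x) * mkN (FreeMonoid.ofList l) := by
  intro l
  induction l generalizing x with
  | nil =>
    show mkN (toWN x) = mkN (toWN x) * mkN 1
    rw [show (mkN 1 : QN) = 1 from rfl, mul_one]
  | cons g l ih =>
    calc mkN (toWN ((g :: l).foldl actN x)) = mkN (toWN (l.foldl actN (actN x g))) := rfl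
    _ = mkN (toWN (actN x g)) * mkN (FreeMonoid.ofList l) := ih _
    _ = mkN (toWN x * FreeMonoid.of g) * mkN (FreeMonoid.ofList l) := by rw [keyN]
    _ = mkN (toWN x) * (mkN (FreeMonoid.of g) * mkN (FreeMonoid.ofList l)) := by
        rw [mkN_mul, mul_assoc]
    _ = mkN (toWN x) * mkN (FreeMonoid.ofList (g :: l)) := rfl

theorem sectM (w : WM) : mkM (toWM (actWM (.inl 0) w)) = mkM w := by
  have h := foldM (.inl 0) (FreeMonoid.toList w)
  have e1 : mkM (toWM (Sum.inl 0 : St)) = 1 := by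
    show mkM (b ^ 0) = 1
    rw [pow_zero]
    rfl
  rw [e1, one_mul] at h
  exact h

theorem sectN (w : WN) : mkN (toWN (actWN (.inl 0) w)) = mkN w := by
  have h := foldN (.inl 0) (FreeMonoid.toList w)
  have e1 : mkN (toWN (Sum.inl 0 : St)) = 1 := by
    show mkN (d ^ 0) = 1
    rw [pow_zero]
    rfl
  rw [e1, one_mul] at h
  exact h

def evalQM : QM → St := fun q => Con.liftOn q (actWM (.inl 0)) fun _ _ h => soundM h _

def evalQN : QN → St := fun q => Con.liftOn q (actWN (.inl 0)) fun _ _ h => soundN h _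

theorem evalQM_mk (w : WM) : evalQM (mkM w) = actWM (.inl 0) w := rfl
theorem evalQN_mk (w : WN) : evalQN (mkN w) = actWN (.inl 0) w := rfl

def eqM : QM ≃ St where
  toFun := evalQM
  invFun := fun m => mkM (toWM m)
  left_inv := fun q => Con.induction_on q fun w => sectM w
  right_inv := fun m => evalM_toWM m

def eqN : QN ≃ St where
  toFun := evalQN
  invFun := fun m => mkN (toWN m)
  left_inv := fun q => Con.induction_on q fun w => sectN w
  right_inv := fun m => evalN_toWN m

theorem evalQM_mul (x : QM) (g : AB) :
    evalQM (x * mkM (FreeMonoid.of g)) = actM (evalQM x) g :=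
  Con.induction_on x fun w => by
    show evalQM (mkM w * mkM (FreeMonoid.of g)) = actM (evalQM (mkM w)) g
    rw [← mkM_mul, evalQM_mk, evalQM_mk, actWM_mul, actWM_of]

theorem evalQN_mul (x : QN) (g : CD) :
    evalQN (x * mkN (FreeMonoid.of g)) = actN (evalQN x) g :=
  Con.induction_on x fun w => by
    show evalQN (mkN w * mkN (FreeMonoid.of g)) = actN (evalQN (mkN w)) g
    rw [← mkN_mul, evalQN_mk, evalQN_mk, actWN_mul, actWN_of]

theorem edgeM (x y : QM) :
    (∃ g, (g = (conGen rM).mk' a ∨ g = (conGen rM).mk' b) ∧ y = x * g) ↔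
      (evalQM y = actM (evalQM x) AB.a ∨ evalQM y = actM (evalQM x) AB.b) := by
  constructor
  · rintro ⟨g, hg | hg, rfl⟩ <;> subst hg
    · exact Or.inl (evalQM_mul x AB.a)
    · exact Or.inr (evalQM_mul x AB.b)
  · rintro (h | h)
    · exact ⟨(conGen rM).mk' a, Or.inl rfl, eqM.injective (h.trans (evalQM_mul x AB.a).symm)⟩
    · exact ⟨(conGen rM).mk' b, Or.inr rfl, eqM.injective (h.trans (evalQM_mul x AB.b).symm)⟩

theorem edgeN (x y : QN) :
    (∃ h, (h = (conGen rN).mk' c ∨ h = (conGen rN).mk' d) ∧ y = x * h) ↔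
      (evalQN y = actN (evalQN x) CD.c ∨ evalQN y = actN (evalQN x) CD.d) := by
  constructor
  · rintro ⟨g, hg | hg, rfl⟩ <;> subst hg
    · exact Or.inl (evalQN_mul x CD.c)
    · exact Or.inr (evalQN_mul x CD.d)
  · rintro (h | h)
    · exact ⟨(conGen rN).mk' c, Or.inl rfl, eqN.injective (h.trans (evalQN_mul x CD.c).symm)⟩
    · exact ⟨(conGen rN).mk' d, Or.inr rfl, eqN.injective (h.trans (evalQN_mul x CD.d).symm)⟩

end S14

/-- The unlabelled directed right Cayley graphs of `M` and `N` are isomorphic: there is a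
bijection `f : M → N` with `(x, y)` an edge iff `(f x, f y)` is. -/
theorem stmt14 :
    ∃ f : (conGen rM).Quotient ≃ (conGen rN).Quotient,
      ∀ x y : (conGen rM).Quotient,
        (∃ g, (g = (conGen rM).mk' a ∨ g = (conGen rM).mk' b) ∧ y = x * g) ↔
        (∃ h, (h = (conGen rN).mk' c ∨ h = (conGen rN).mk' d) ∧ f y = f x * h) := by
  refine ⟨S14.eqM.trans S14.eqN.symm, fun x y => ?_⟩
  rw [S14.edgeM x y, S14.edgeN ((S14.eqM.trans S14.eqN.symm) x) ((S14.eqM.trans S14.eqN.symm) y)]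
  have h1 : S14.evalQN ((S14.eqM.trans S14.eqN.symm) x) = S14.evalQM x :=
    S14.eqN.apply_symm_apply (S14.evalQM x)
  have h2 : S14.evalQN ((S14.eqM.trans S14.eqN.symm) y) = S14.evalQM y :=
    S14.eqN.apply_symm_apply (S14.evalQM y)
  rw [h1, h2]
  exact S14.edge_sets (S14.evalQM x) (S14.evalQM y)
end

section
/- The left Cayley graphs of M = ⟨a,b | ab^n a = aba (n ≥ 2)⟩ and N = ⟨c,d | cdc = cd²c = cd⁴ = cd³c² = cd³cdc⟩ with respect to the given generating sets are not isomorphic as unlabelled directed graphs. -/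
open Relation

section Aux

deriving instance DecidableEq for CD

instance : Fintype CD := ⟨{CD.c, CD.d}, by intro x; cases x <;> simp⟩

/-- Left multiplication by `c` on normal forms of `N`. -/
def stepC : List CD → List CD
  | [] => [.c]
  | .c :: t => .c :: .c :: t
  | [.d] => [.c, .d]
  | .d :: .c :: t => .c :: .d :: .c :: t
  | [.d, .d] => [.c, .d, .d]
  | .d :: .d :: .c :: t => .c :: .d :: .c :: t
  | [.d, .d, .d] => [.c, .d, .d, .d]
  | [.d, .d, .d, .c] => [.c, .d, .d, .d, .c]
  | .d :: .d :: .d :: .c :: .c :: t => .c :: .d :: .c :: t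
  | [.d, .d, .d, .c, .d] => [.c, .d, .d, .d, .c, .d]
  | .d :: .d :: .d :: .c :: .d :: .c :: t => .c :: .d :: .c :: t
  | .d :: .d :: .d :: .c :: .d :: .d :: t => .c :: .d :: .d :: .d :: .c :: .d :: .d :: t
  | .d :: .d :: .d :: .d :: t => .c :: .d :: stepC t

lemma stepC_head (t : List CD) : ∃ X, stepC t = .c :: X := by
  induction t using stepC.induct <;> simp [stepC]

lemma stepC_length (t : List CD) : t.length ≤ 2 * (stepC t).length + 2 := by
  induction t using stepC.induct <;> simp [stepC] <;> omega

def phiN : WN →* Function.End (List CD) :=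
  FreeMonoid.lift fun x => match x with
    | CD.c => (stepC : Function.End (List CD))
    | CD.d => ((CD.d :: ·) : Function.End (List CD))

lemma phiN_mul (u v : WN) (t : List CD) : phiN (u * v) t = phiN u (phiN v t) := by
  rw [map_mul]; rfl

lemma phiN_c (t : List CD) : phiN c t = stepC t := rfl
lemma phiN_d (t : List CD) : phiN d t = .d :: t := rfl

lemma hkerN : conGen rN ≤ Con.ker phiN := by
  apply Con.conGen_le.mpr
  rintro x y ⟨hx, rfl⟩
  rcases hx with rfl | rfl | rfl | rfl <;>
  · show phiN _ = phiN _
    funext t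
    obtain ⟨X, hX⟩ := stepC_head t
    simp only [pow_succ, pow_zero, one_mul, phiN_mul, phiN_c, phiN_d]
    simp [stepC, hX]

end Aux
section Aux2

lemma relN {u v : WN} (h : rN u v) : (conGen rN).mk' u = (conGen rN).mk' v :=
  (Con.eq _).mpr (ConGen.Rel.of _ _ h)

def liftN : (conGen rN).Quotient →* Function.End (List CD) := (conGen rN).lift phiN hkerN

def NFn : (conGen rN).Quotient → List CD := fun x => liftN x []

def mkW : List CD → (conGen rN).Quotient := fun l => (conGen rN).mk' (FreeMonoid.ofList l)

lemma mkW_cons (x : CD) (l : List CD) :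
    mkW (x :: l) = (conGen rN).mk' (FreeMonoid.of x) * mkW l := by
  rw [mkW, FreeMonoid.ofList_cons, map_mul]; rfl

lemma mkW_stepC (t : List CD) : mkW (stepC t) = (conGen rN).mk' c * mkW t := by
  have e2 := relN (u := c * d^2 * c) ⟨Or.inl rfl, rfl⟩
  have e4 := relN (u := c * d^4) ⟨Or.inr (Or.inl rfl), rfl⟩
  have e32 := relN (u := c * d^3 * c^2) ⟨Or.inr (Or.inr (Or.inl rfl)), rfl⟩
  have e3c := relN (u := c * d^3 * (c * d * c)) ⟨Or.inr (Or.inr (Or.inr rfl)), rfl⟩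
  have hc : FreeMonoid.of CD.c = c := rfl
  have hd : FreeMonoid.of CD.d = d := rfl
  simp only [pow_succ, pow_zero, one_mul, map_mul, ← mul_assoc] at e2 e4 e32 e3c
  induction t using stepC.induct <;>
    simp_all only [stepC, mkW_cons, hc, hd, ← mul_assoc]

end Aux2
section Aux3

lemma liftN_mk (w : WN) : liftN ((conGen rN).mk' w) = phiN w := Con.lift_mk' hkerN w

lemma mkW_phiN (l : List CD) : mkW (phiN (FreeMonoid.ofList l) []) = mkW l := by
  induction l with
  | nil => simp [map_one]; rfl
  | cons x l ih =>
    rw [FreeMonoid.ofList_cons, phiN_mul]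
    cases x with
    | c =>
      show mkW (stepC _) = _
      rw [mkW_stepC, ih, mkW_cons]
      rfl
    | d =>
      show mkW (CD.d :: _) = _
      rw [mkW_cons, ih, mkW_cons]

lemma mkW_NF (x : (conGen rN).Quotient) : mkW (NFn x) = x := by
  induction x using Con.induction_on with
  | H w =>
    have h1 : ((w : (conGen rN).Quotient)) = (conGen rN).mk' w := rfl
    rw [h1]
    show mkW (liftN ((conGen rN).mk' w) []) = _
    rw [liftN_mk]
    have h2 : w = FreeMonoid.ofList (FreeMonoid.toList w) := rfl
    rw [h2, mkW_phiN]
    rfl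

lemma NF_inj : Function.Injective NFn := by
  intro x y h
  rw [← mkW_NF x, ← mkW_NF y, h]

lemma NF_c (x : (conGen rN).Quotient) : NFn ((conGen rN).mk' c * x) = stepC (NFn x) := by
  show liftN _ [] = _
  rw [map_mul, liftN_mk]
  rfl

lemma NF_d (x : (conGen rN).Quotient) : NFn ((conGen rN).mk' d * x) = CD.d :: NFn x := by
  show liftN _ [] = _
  rw [map_mul, liftN_mk]
  rfl

end Aux3
section Aux4

def hE : Function.End ℕ := fun x => if x = 0 then 1 else 0

def phiM : WM →* Function.End ℕ :=
  FreeMonoid.lift fun x => match x with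
    | AB.a => hE
    | AB.b => (Nat.succ : Function.End ℕ)

lemma phiM_mul (u v : WM) (m : ℕ) : phiM (u * v) m = phiM u (phiM v m) := by
  rw [map_mul]; rfl

lemma phiM_a (m : ℕ) : phiM a m = hE m := rfl
lemma phiM_b (m : ℕ) : phiM b m = m + 1 := rfl

lemma phiM_bpow (n m : ℕ) : phiM (b ^ n) m = m + n := by
  induction n generalizing m with
  | zero => rw [pow_zero, map_one]; rfl
  | succ k ih =>
    rw [pow_succ, phiM_mul]
    show phiM (b ^ k) (m + 1) = m + (k + 1)
    rw [ih]; omega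

lemma hkerM : conGen rM ≤ Con.ker phiM := by
  apply Con.conGen_le.mpr
  rintro x y ⟨n, hn, rfl, rfl⟩
  show phiM _ = phiM _
  funext m
  rw [phiM_mul, phiM_mul, phiM_mul, phiM_mul]
  show hE (phiM (b ^ n) (hE m)) = hE (phiM b (hE m))
  rw [phiM_bpow, phiM_b]
  have h1 : hE m + n ≠ 0 := by have := hn; omega
  have h2 : hE m + 1 ≠ 0 := by omega
  simp only [hE]
  have h1' : ¬((if m = 0 then 1 else 0) + n = 0) := by split <;> omega
  have h2' : ¬((if m = 0 then 1 else 0) + 1 = 0) := by split <;> omega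
  simp [h1', h2']; omega

def liftMM : (conGen rM).Quotient →* Function.End ℕ := (conGen rM).lift phiM hkerM

def uM (n : ℕ) : (conGen rM).Quotient := (conGen rM).mk' (b ^ (n + 2) * a)

lemma liftMM_mk (w : WM) : liftMM ((conGen rM).mk' w) = phiM w := Con.lift_mk' hkerM w

lemma liftMM_uM (n : ℕ) : liftMM (uM n) 0 = n + 3 := by
  rw [uM, liftMM_mk]
  show phiM (b ^ (n+2) * a) 0 = n + 3
  rw [phiM_mul, phiM_bpow]
  show hE 0 + (n + 2) = n + 3
  show 1 + (n + 2) = n + 3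
  omega

lemma uM_inj : Function.Injective uM := by
  intro m n h
  have := congrArg (fun z => liftMM z 0) h
  simp only [liftMM_uM] at this
  omega

lemma relM {u v : WM} (h : rM u v) : (conGen rM).mk' u = (conGen rM).mk' v :=
  (Con.eq _).mpr (ConGen.Rel.of _ _ h)

lemma uM_edge (n : ℕ) :
    (conGen rM).mk' a * uM n = (conGen rM).mk' (a * b * a) := by
  rw [uM, ← map_mul]
  exact relM ⟨n + 2, by omega, by rw [mul_assoc], rfl⟩

end Aux4

/-- The unlabelled directed left Cayley graphs of `M` and `N` are not isomorphic. -/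
theorem stmt18 :
    ¬ ∃ f : (conGen rM).Quotient ≃ (conGen rN).Quotient,
      ∀ x y : (conGen rM).Quotient,
        (∃ g, (g = (conGen rM).mk' a ∨ g = (conGen rM).mk' b) ∧ y = g * x) ↔
        (∃ h, (h = (conGen rN).mk' c ∨ h = (conGen rN).mk' d) ∧ f y = h * f x) := by
  rintro ⟨f, hf⟩
  set y0 : (conGen rM).Quotient := (conGen rM).mk' (a * b * a) with hy0
  set Y : (conGen rN).Quotient := f y0 with hY
  set P : Set (conGen rN).Quotient :=
    {z | (conGen rN).mk' c * z = Y ∨ (conGen rN).mk' d * z = Y} with hP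
  have hmem : ∀ n, f (uM n) ∈ P := by
    intro n
    obtain ⟨h, hh, he⟩ := (hf (uM n) y0).mp ⟨(conGen rM).mk' a, Or.inl rfl, (uM_edge n).symm⟩
    rcases hh with rfl | rfl
    · exact Or.inl he.symm
    · exact Or.inr he.symm
  have hPfin : P.Finite := by
    apply Set.Finite.of_finite_image (f := NFn) _ NF_inj.injOn
    apply Set.Finite.subset (List.finite_length_le CD (2 * (NFn Y).length + 2))
    rintro l ⟨z, hz, rfl⟩
    rcases hz with h | h
    · have h2 := congrArg NFn h
      rw [NF_c] at h2
      have hl := stepC_length (NFn z)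
      rw [h2] at hl
      exact hl
    · have h2 := congrArg NFn h
      rw [NF_d] at h2
      have h3 := congrArg List.length h2
      simp only [List.length_cons] at h3
      show (NFn z).length ≤ 2 * (NFn Y).length + 2
      omega
  have hinf : (Set.range fun n => f (uM n)).Infinite :=
    Set.infinite_range_of_injective (f.injective.comp uM_inj)
  apply hinf
  apply hPfin.subset
  rintro z ⟨n, rfl⟩
  exact hmem n
end
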